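/- arXiv:1410.6226 — 3 statements merged into one kernel-verified Lean document; each statement's English description precedes it below -/
import Mathlib

section
/- Let p be a prime and G a finite p-group. If every proper subgroup H of G is nilpotent of class at most 2, then G is nilpotent of class at most 3. -/
namespace ClassLeThreeAux

open Subgroup Pointwise
open scoped commutatorElement

universe u

variable {G : Type u} [Group G]

/- Pure group identities -/
private lemma comm_mul_right (a x y : G) : ⁅a, x*y⁆ = ⁅a,x⁆ * (x * ⁅a,y⁆ * x⁻¹) := by group

private lemma comm_mul_left (a b x : G) : ⁅a*b, x⁆ = (a * ⁅b,x⁆ * a⁻¹) * ⁅a,x⁆ := by group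

private lemma conj_eq_comm (a b : G) : a*b*a⁻¹ = ⁅a,b⁆ * b := by group

private lemma comm_inv_left (a b : G) : ⁅a⁻¹, b⁆ = a⁻¹ * ⁅a,b⁆⁻¹ * a := by group

private lemma comm_inv_left' (a b : G) : ⁅a⁻¹, b⁆ = a⁻¹ * ⁅b,a⁆ * a := by group

private lemma comm_inv_right (a b : G) : ⁅a, b⁻¹⁆ = b⁻¹ * ⁅b,a⁆ * b := by group

private lemma comm_inv_inv (a b : G) : ⁅a⁻¹,b⁻¹⁆ = (a*b)⁻¹ * ⁅a,b⁆ * (a*b) := by group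

private lemma hall_witt (x y z : G) :
    (y⁻¹ * ⁅⁅y,x⁻¹⁆,z⁻¹⁆ * y) * (z⁻¹ * ⁅⁅z,y⁻¹⁆,x⁻¹⁆ * z) *
      (x⁻¹ * ⁅⁅x,z⁻¹⁆,y⁻¹⁆ * x) = 1 := by group

/-- conjugation by a commuting element is trivial -/
private lemma conj_of_comm {a x : G} (h : a * x = x * a) : x * a * x⁻¹ = a := by
  rw [← h]; group

private lemma conj_of_comm' {a x : G} (h : a * x = x * a) : x⁻¹ * a * x = a :=
  calc x⁻¹ * a * x = x⁻¹ * (a * x) := by group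
  _ = x⁻¹ * (x * a) := by rw [h]
  _ = a := by group

private lemma comm_zpow (c g : G) (h : c * ⁅c,g⁆ = ⁅c,g⁆ * c) :
    ∀ i : ℤ, ⁅c^i, g⁆ = ⁅c,g⁆^i := by
  have hc : Commute c ⁅c,g⁆ := h
  have hn : ∀ n : ℕ, ⁅c^n, g⁆ = ⁅c,g⁆^n := by
    intro n
    induction n with
    | zero => simp [commutatorElement_def]
    | succ n ih =>
      rw [pow_succ', comm_mul_left, ih, conj_of_comm ((hc.pow_right n).symm.eq), pow_succ]
  intro i
  cases i with
  | ofNat n => simpa using hn n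
  | negSucc n =>
    rw [zpow_negSucc, comm_inv_left, hn]
    have : Commute (c^(n+1)) (⁅c,g⁆^(n+1))⁻¹ := ((hc.pow_pow (n+1) (n+1))).inv_right
    rw [conj_of_comm' this.symm.eq]
    exact (zpow_negSucc _ _).symm

private lemma abelian_of_two_commuting_gens {Q : Type*} [Group Q] {a b : Q}
    (hgen : Subgroup.closure {a, b} = ⊤) (hab : a * b = b * a) (q r : Q) : q * r = r * q := by
  have hstep : ∀ s : Q, (∀ t : Q, s * t = t * s) → ∀ q : Q, True := fun _ _ _ => trivial
  have hA : ∀ t : Q, a * t = t * a := by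
    intro t
    have h1 : Subgroup.closure {a, b} ≤ Subgroup.centralizer {a} := by
      rw [Subgroup.closure_le]
      rintro x (rfl | rfl)
      · exact Subgroup.mem_centralizer_iff.mpr (by rintro m (rfl); rfl)
      · exact Subgroup.mem_centralizer_iff.mpr (by rintro m (rfl); exact hab)
    have := h1 (hgen ▸ Subgroup.mem_top t)
    exact Subgroup.mem_centralizer_iff.mp this a rfl
  have hB : ∀ t : Q, b * t = t * b := by
    intro t
    have h1 : Subgroup.closure {a, b} ≤ Subgroup.centralizer {b} := by
      rw [Subgroup.closure_le]
      rintro x (rfl | rfl)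
      · exact Subgroup.mem_centralizer_iff.mpr (by rintro m (rfl); exact hab.symm)
      · exact Subgroup.mem_centralizer_iff.mpr (by rintro m (rfl); rfl)
    have := h1 (hgen ▸ Subgroup.mem_top t)
    exact Subgroup.mem_centralizer_iff.mp this b rfl
  have h1 : Subgroup.closure {a, b} ≤ Subgroup.centralizer {q} := by
    rw [Subgroup.closure_le]
    rintro x (rfl | rfl)
    · exact Subgroup.mem_centralizer_iff.mpr (by rintro m (rfl); exact (hA m).symm)
    · exact Subgroup.mem_centralizer_iff.mpr (by rintro m (rfl); exact (hB m).symm)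
  exact Subgroup.mem_centralizer_iff.mp (h1 (hgen ▸ Subgroup.mem_top r)) q rfl

private lemma lcs_le_map_of_surjective {H : Type*} [Group H] (f : G →* H)
    (hf : Function.Surjective f) (n : ℕ) :
    (⊤ : Subgroup H).lowerCentralSeries n ≤ Subgroup.map f ((⊤ : Subgroup G).lowerCentralSeries n) := by
  induction n with
  | zero =>
    rw [Subgroup.lowerCentralSeries_zero, Subgroup.lowerCentralSeries_zero, ← MonoidHom.range_eq_map,
      f.range_eq_top_of_surjective hf]
  | succ n ih =>
    show ⁅(⊤ : Subgroup H).lowerCentralSeries n, ⊤⁆ ≤ Subgroup.map f ⁅(⊤ : Subgroup G).lowerCentralSeries n, ⊤⁆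
    rw [Subgroup.map_commutator, Subgroup.map_top_of_surjective f hf]
    exact Subgroup.commutator_mono ih le_rfl

private lemma keyElt (h : ∀ H : Subgroup G, H ≠ ⊤ → (⊤ : Subgroup H).lowerCentralSeries 2 = ⊥)
    {H : Subgroup G} (hH : H ≠ ⊤) {a b c : G} (ha : a ∈ H) (hb : b ∈ H) (hc : c ∈ H) :
    ⁅⁅a,b⁆,c⁆ = 1 := by
  have h2 := h H hH
  have hmap : Subgroup.map H.subtype ((⊤ : Subgroup H).lowerCentralSeries 2) = ⁅⁅H,H⁆,H⁆ := by
    show Subgroup.map H.subtype ⁅⁅(⊤ : Subgroup H),⊤⁆,⊤⁆ = _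
    rw [Subgroup.map_commutator, Subgroup.map_commutator, ← MonoidHom.range_eq_map,
      H.range_subtype]
  have hmem : (⁅⁅a,b⁆,c⁆ : G) ∈ ⁅⁅H,H⁆,H⁆ :=
    commutator_mem_commutator (commutator_mem_commutator ha hb) hc
  rw [← hmap, h2, Subgroup.map_bot] at hmem
  exact Subgroup.mem_bot.mp hmem


private lemma core (h : ∀ H : Subgroup G, H ≠ ⊤ → (⊤ : Subgroup H).lowerCentralSeries 2 = ⊥)
    {p : ℕ} (hp : p.Prime) (hG : IsPGroup p G)
    (hL1' : ∀ x : G, Subgroup.zpowers x ⊔ (⊤ : Subgroup G).lowerCentralSeries 1 ≠ ⊤)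
    (hL2 : ∀ x yy : G,
      Subgroup.zpowers yy ⊔ Subgroup.zpowers (x^p) ⊔ (⊤ : Subgroup G).lowerCentralSeries 1 ≠ ⊤)
    (hF1 : ∀ m ∈ (⊤ : Subgroup G).lowerCentralSeries 2, ∀ u ∈ (⊤ : Subgroup G).lowerCentralSeries 1, m * u = u * m)
    (hcent3 : (⊤ : Subgroup G).lowerCentralSeries 3 ≤ Subgroup.center G)
    (g k : G) (hgen : Subgroup.closure {g, k} = ⊤) :
    ∀ u ∈ (⊤ : Subgroup G).lowerCentralSeries 1, ⁅⁅u,g⁆,k⁆ = 1 := by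
  have mem1 : ∀ s t : G, ⁅s,t⁆ ∈ (⊤ : Subgroup G).lowerCentralSeries 1 := fun s t =>
    commutator_mem_commutator (Subgroup.mem_top s) (Subgroup.mem_top t)
  have mem2 : ∀ a ∈ (⊤ : Subgroup G).lowerCentralSeries 1, ∀ b : G, ⁅a,b⁆ ∈ (⊤ : Subgroup G).lowerCentralSeries 2 :=
    fun a ha b => commutator_mem_commutator ha (Subgroup.mem_top b)
  have mem3 : ∀ a ∈ (⊤ : Subgroup G).lowerCentralSeries 2, ∀ b : G, ⁅a,b⁆ ∈ (⊤ : Subgroup G).lowerCentralSeries 3 :=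
    fun a ha b => commutator_mem_commutator ha (Subgroup.mem_top b)
  have hcent : ∀ a ∈ (⊤ : Subgroup G).lowerCentralSeries 3, ∀ x : G, a * x = x * a :=
    fun a ha x => (Subgroup.mem_center_iff.mp (hcent3 ha) x).symm
  obtain ⟨c, hc⟩ : ∃ c : G, c = ⁅g,k⁆ := ⟨_, rfl⟩
  obtain ⟨y, hy⟩ : ∃ y : G, y = ⁅c,g⁆ := ⟨_, rfl⟩
  obtain ⟨z, hz⟩ : ∃ z : G, z = ⁅c,k⁆ := ⟨_, rfl⟩
  obtain ⟨w₁, hw₁⟩ : ∃ w : G, w = ⁅y,k⁆ := ⟨_, rfl⟩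
  obtain ⟨w₂, hw₂⟩ : ∃ w : G, w = ⁅z,g⁆ := ⟨_, rfl⟩
  have hcΓ : c ∈ (⊤ : Subgroup G).lowerCentralSeries 1 := hc ▸ mem1 g k
  have hyΓ : y ∈ (⊤ : Subgroup G).lowerCentralSeries 1 := hy ▸ mem1 c g
  have hzΓ : z ∈ (⊤ : Subgroup G).lowerCentralSeries 1 := hz ▸ mem1 c k
  have hy2 : y ∈ (⊤ : Subgroup G).lowerCentralSeries 2 := hy ▸ mem2 c hcΓ g
  have hz2 : z ∈ (⊤ : Subgroup G).lowerCentralSeries 2 := hz ▸ mem2 c hcΓ k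
  have hw₁3 : w₁ ∈ (⊤ : Subgroup G).lowerCentralSeries 3 := hw₁ ▸ mem3 y hy2 k
  have hw₂3 : w₂ ∈ (⊤ : Subgroup G).lowerCentralSeries 3 := hw₂ ▸ mem3 z hz2 g
  have hyc : y * c = c * y := hF1 y hy2 c hcΓ
  have hzc : z * c = c * z := hF1 z hz2 c hcΓ
  have hyz : y * z = z * y := hF1 y hy2 z hzΓ
  have hw₁x : ∀ x : G, w₁ * x = x * w₁ := hcent w₁ hw₁3
  have hw₂x : ∀ x : G, w₂ * x = x * w₂ := hcent w₂ hw₂3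
  -- single-generator facts
  have m1 : ⁅y,g⁆ = 1 := by
    rw [hy, hc]
    exact keyElt h (hL1' g) (Subgroup.mem_sup_right (mem1 g k))
      (Subgroup.mem_sup_left (Subgroup.mem_zpowers g))
      (Subgroup.mem_sup_left (Subgroup.mem_zpowers g))
  have m2 : ⁅z,k⁆ = 1 := by
    rw [hz, hc]
    exact keyElt h (hL1' k) (Subgroup.mem_sup_right (mem1 g k))
      (Subgroup.mem_sup_left (Subgroup.mem_zpowers k))
      (Subgroup.mem_sup_left (Subgroup.mem_zpowers k))
  have hyg : y * g = g * y := commutatorElement_eq_one_iff_mul_comm.mp m1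
  have hzk : z * k = k * z := commutatorElement_eq_one_iff_mul_comm.mp m2
  -- expansions
  have E_cgk : ⁅c, g*k⁆ = y * (w₂⁻¹ * z) := by
    rw [comm_mul_right, ← hy, ← hz, conj_eq_comm g z]
    have : ⁅g,z⁆ = w₂⁻¹ := by rw [hw₂, commutatorElement_inv]
    rw [this]
  have E_ygk : ⁅y, g*k⁆ = w₁ := by
    rw [comm_mul_right, ← hw₁, m1, conj_of_comm (hw₁x g), one_mul]
  have E_zgk : ⁅z, g*k⁆ = w₂ := by
    rw [comm_mul_right, ← hw₂, m2, conj_of_comm (by group : (1:G) * g = g * 1)]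
    group
  have m3 : w₂ * w₁ = 1 := by
    have hk1 : ⁅⁅c, g*k⁆, g*k⁆ = 1 := by
      rw [hc]
      exact keyElt h (hL1' (g*k)) (Subgroup.mem_sup_right (mem1 g k))
        (Subgroup.mem_sup_left (Subgroup.mem_zpowers (g*k)))
        (Subgroup.mem_sup_left (Subgroup.mem_zpowers (g*k)))
    rw [E_cgk] at hk1
    rw [comm_mul_left y (w₂⁻¹ * z) (g*k), comm_mul_left w₂⁻¹ z (g*k)] at hk1
    have hw₂inv : ⁅w₂⁻¹, g*k⁆ = 1 :=
      commutatorElement_eq_one_iff_mul_comm.mpr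
        ((show Commute w₂ (g*k) from hw₂x (g*k)).inv_left.eq)
    rw [hw₂inv, E_zgk, E_ygk, mul_one] at hk1
    calc w₂ * w₁ = y * (w₂⁻¹ * w₂ * w₂⁻¹⁻¹) * y⁻¹ * w₁ := by
          rw [show w₂⁻¹ * w₂ * w₂⁻¹⁻¹ = w₂ by group, conj_of_comm (hw₂x y)]
    _ = 1 := hk1
  -- Hall-Witt gives the symmetric relation w₂ = w₁
  have hSY : w₂ = w₁ := by
    have hw := hall_witt c g k
    have s1a : ⁅g, c⁻¹⁆ = y := by
      rw [comm_inv_right g c, ← hy, conj_of_comm' hyc]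
    have s1b : ⁅y, k⁻¹⁆ = w₁⁻¹ := by
      rw [comm_inv_right y k, show ⁅k,y⁆ = w₁⁻¹ by rw [hw₁, commutatorElement_inv]]
      exact conj_of_comm' ((show Commute w₁ k from hw₁x k).inv_left.eq)
    have s2a : ⁅k, g⁻¹⁆ = y * c := by
      rw [comm_inv_right k g, ← hc,
        show g⁻¹ * c * g = g⁻¹ * c * g⁻¹⁻¹ by rw [inv_inv], conj_eq_comm g⁻¹ c,
        comm_inv_left' g c, ← hy, conj_of_comm' hyg]
    have s2b : ⁅⁅k,g⁻¹⁆, c⁻¹⁆ = 1 := by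
      rw [s2a]
      exact commutatorElement_eq_one_iff_mul_comm.mpr
        (((show Commute y c from hyc).mul_left (Commute.refl c)).inv_right.eq)
    have s3a : ⁅c, k⁻¹⁆ = z⁻¹ := by
      rw [comm_inv_right c k, show ⁅k,c⁆ = z⁻¹ by rw [hz, commutatorElement_inv]]
      exact conj_of_comm' ((show Commute z k from hzk).inv_left.eq)
    have s3b : ⁅z⁻¹, g⁻¹⁆ = w₂ := by
      rw [comm_inv_inv z g, ← hw₂]
      exact conj_of_comm' (hw₂x (z*g))
    rw [s1a, s1b, s2b, s3a, s3b,
      conj_of_comm' ((show Commute w₁ g from hw₁x g).inv_left.eq),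
      conj_of_comm' (hw₂x c)] at hw
    have h1 : w₁⁻¹ * w₂ = 1 := by rw [← hw]; group
    calc w₂ = w₁ * (w₁⁻¹ * w₂) := by group
    _ = w₁ := by rw [h1]; group
  have hsq : w₁ * w₁ = 1 := hSY ▸ m3
  have hw₁1 : w₁ = 1 := by
    rcases hp.eq_two_or_odd' with hp2 | hpodd
    · -- p = 2
      subst hp2
      have hA' : ⁅⁅g^2, k⁆, k⁆ = 1 := by
        refine keyElt h (hL2 g k) ?_ ?_ ?_
        · exact Subgroup.mem_sup_left (Subgroup.mem_sup_right (Subgroup.mem_zpowers (g^2)))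
        · exact Subgroup.mem_sup_left (Subgroup.mem_sup_left (Subgroup.mem_zpowers k))
        · exact Subgroup.mem_sup_left (Subgroup.mem_sup_left (Subgroup.mem_zpowers k))
      have hB' : ⁅⁅k^2, g⁆, g⁆ = 1 := by
        refine keyElt h (hL2 k g) ?_ ?_ ?_
        · exact Subgroup.mem_sup_left (Subgroup.mem_sup_right (Subgroup.mem_zpowers (k^2)))
        · exact Subgroup.mem_sup_left (Subgroup.mem_sup_left (Subgroup.mem_zpowers g))
        · exact Subgroup.mem_sup_left (Subgroup.mem_sup_left (Subgroup.mem_zpowers g))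
      have hC' : ⁅⁅g^2, g*k⁆, g*k⁆ = 1 := by
        refine keyElt h (hL2 g (g*k)) ?_ ?_ ?_
        · exact Subgroup.mem_sup_left (Subgroup.mem_sup_right (Subgroup.mem_zpowers (g^2)))
        · exact Subgroup.mem_sup_left (Subgroup.mem_sup_left (Subgroup.mem_zpowers (g*k)))
        · exact Subgroup.mem_sup_left (Subgroup.mem_sup_left (Subgroup.mem_zpowers (g*k)))
      -- expansion of ⁅g²,k⁆
      have Eg2k : ⁅g^2, k⁆ = y⁻¹ * c * c := by
        rw [pow_two, comm_mul_left g g k, ← hc, conj_eq_comm g c,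
          show ⁅g,c⁆ = y⁻¹ by rw [hy, commutatorElement_inv]]
      -- A : z*z = w₁
      have eA : ⁅⁅g^2,k⁆,k⁆ = z * z * w₁⁻¹ := by
        rw [Eg2k, comm_mul_left (y⁻¹*c) c k, comm_mul_left y⁻¹ c k, ← hz,
          comm_inv_left y k, ← hw₁, inv_inv,
          conj_of_comm (((show Commute y z from hyz).symm.inv_right.mul_right
            (show Commute z c from hzc)).eq),
          conj_of_comm' ((show Commute y z from hyz).symm.eq),
          conj_of_comm' ((show Commute w₁ y from hw₁x y).inv_left.eq)]
        group
      have hAv : z * z * w₁⁻¹ = 1 := by rw [← eA]; exact hA'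
      have hzz : z * z = w₁ := by
        calc z*z = (z*z*w₁⁻¹)*w₁ := by group
        _ = w₁ := by rw [hAv]; group
      -- B : y*y = w₂
      have Ek2g : ⁅k^2, g⁆ = z * c⁻¹ * c⁻¹ := by
        rw [pow_two, comm_mul_left k k g,
          show ⁅k,g⁆ = c⁻¹ by rw [hc, commutatorElement_inv],
          conj_eq_comm k c⁻¹, comm_inv_right k c, ← hz, conj_of_comm' hzc]
      have eB : ⁅⁅k^2,g⁆,g⁆ = y⁻¹ * (y⁻¹ * w₂) := by
        rw [Ek2g, comm_mul_left (z*c⁻¹) c⁻¹ g, comm_mul_left z c⁻¹ g,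
          comm_inv_left c g, ← hy, ← hw₂,
          conj_of_comm' ((show Commute y c from hyc).inv_left.eq),
          conj_of_comm (((show Commute y z from hyz).inv_left.mul_right
            ((show Commute y c from hyc).inv_left.inv_right)).eq),
          conj_of_comm ((show Commute y z from hyz).inv_left.eq)]
      have hBv : y⁻¹ * (y⁻¹ * w₂) = 1 := by rw [← eB]; exact hB'
      have hyy : y * y = w₂ := by
        have : w₂ = y*y := by
          calc w₂ = (y*y)*(y⁻¹*(y⁻¹*w₂)) := by group
          _ = y*y := by rw [hBv]; group
        exact this.symm
      -- C
      have hYpow : (y:G)^(-3:ℤ) = y⁻¹*y⁻¹*y⁻¹ := by group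
      have Eg2gk : ⁅g^2, g*k⁆ = y^(-3:ℤ) * (c*c) := by
        rw [comm_mul_right (g^2) g k, show ⁅g^2,g⁆ = 1 by rw [pow_two]; group, one_mul, Eg2k,
          show g * (y⁻¹ * c * c) * g⁻¹ = (g*y⁻¹*g⁻¹) * ((g*c*g⁻¹) * (g*c*g⁻¹)) by group,
          conj_of_comm ((show Commute y g from hyg).inv_left.eq),
          conj_eq_comm g c, show ⁅g,c⁆ = y⁻¹ by rw [hy, commutatorElement_inv], hYpow]
        calc y⁻¹ * (y⁻¹ * c * (y⁻¹ * c)) = y⁻¹ * y⁻¹ * (c * y⁻¹) * c := by group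
        _ = y⁻¹ * y⁻¹ * (y⁻¹ * c) * c := by
            rw [show c * y⁻¹ = y⁻¹ * c from ((show Commute y c from hyc).inv_left.eq).symm]
        _ = y⁻¹*y⁻¹*y⁻¹*(c*c) := by group
      have hPc : Commute (y*(w₂⁻¹*z)) c :=
        (show Commute y c from hyc).mul_left
          (((show Commute w₂ c from hw₂x c).inv_left).mul_left (show Commute z c from hzc))
      have hPy : Commute (y*(w₂⁻¹*z)) y :=
        (Commute.refl y).mul_left
          (((show Commute w₂ y from hw₂x y).inv_left).mul_left
            (show Commute z y from (show Commute y z from hyz).symm))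
      have Ecc : ⁅c*c, g*k⁆ = (y*(w₂⁻¹*z)) * (y*(w₂⁻¹*z)) := by
        rw [comm_mul_left c c (g*k), E_cgk, conj_of_comm hPc.eq]
      have eC : ⁅⁅g^2, g*k⁆, g*k⁆ = (y*(w₂⁻¹*z)) * (y*(w₂⁻¹*z)) * w₁^(-3:ℤ) := by
        rw [Eg2gk, comm_mul_left (y^(-3:ℤ)) (c*c) (g*k), Ecc,
          comm_zpow y (g*k) (by rw [E_ygk]; exact (hw₁x y).symm) (-3), E_ygk]
        rw [conj_of_comm ((hPy.mul_left hPy).zpow_right (-3 : ℤ)).eq]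
      have hCv : (y*(w₂⁻¹*z)) * (y*(w₂⁻¹*z)) * w₁^(-3:ℤ) = 1 := by rw [← eC]; exact hC'
      have hP2 : (y*(w₂⁻¹*z)) * (y*(w₂⁻¹*z)) = (y*y) * ((w₂⁻¹*w₂⁻¹) * (z*z)) := by
        calc (y*(w₂⁻¹*z))*(y*(w₂⁻¹*z)) = y*(w₂⁻¹*(z*y))*(w₂⁻¹*z) := by group
        _ = y*(w₂⁻¹*(y*z))*(w₂⁻¹*z) := by
            rw [show z*y = y*z from (show Commute y z from hyz).symm.eq]
        _ = y*((w₂⁻¹*y)*z)*(w₂⁻¹*z) := by group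
        _ = y*((y*w₂⁻¹)*z)*(w₂⁻¹*z) := by
            rw [show w₂⁻¹*y = y*w₂⁻¹ from ((show Commute w₂ y from hw₂x y).inv_left).eq]
        _ = (y*y)*(w₂⁻¹*(z*w₂⁻¹)*z) := by group
        _ = (y*y)*(w₂⁻¹*(w₂⁻¹*z)*z) := by
            rw [show z*w₂⁻¹ = w₂⁻¹*z from ((show Commute w₂ z from hw₂x z).inv_left).symm.eq]
        _ = (y*y)*((w₂⁻¹*w₂⁻¹)*(z*z)) := by group
      rw [hP2, hyy, hzz, hSY] at hCv
      have hcube : w₁^(3:ℤ) = 1 := by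
        calc w₁^(3:ℤ) = (w₁ * ((w₁⁻¹*w₁⁻¹) * w₁) * w₁^(-3:ℤ))⁻¹ := by group
        _ = 1 := by rw [hCv]; group
      calc w₁ = w₁^(3:ℤ) * (w₁*w₁)⁻¹ := by group
      _ = 1 := by rw [hcube, hsq]; group
    · -- p odd
      obtain ⟨kk, hkk⟩ := hG w₁
      have h2 : orderOf w₁ ∣ 2 := orderOf_dvd_of_pow_eq_one (by rw [pow_two]; exact hsq)
      have hpk : orderOf w₁ ∣ p ^ kk := orderOf_dvd_of_pow_eq_one hkk
      rcases (Nat.dvd_prime Nat.prime_two).mp h2 with h1 | h1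
      · exact orderOf_eq_one_iff.mp h1
      · exfalso
        have hd : (2:ℕ) ∣ p ^ kk := h1 ▸ hpk
        have hd2 := Nat.Prime.dvd_of_dvd_pow Nat.prime_two hd
        have : p = 2 := ((Nat.prime_dvd_prime_iff_eq Nat.prime_two hp).mp hd2).symm
        rw [this] at hpodd
        norm_num [Nat.odd_iff] at hpodd
  -- Now every element of the commutator subgroup satisfies the claim.
  obtain ⟨D, hD⟩ : ∃ D : Subgroup G, D = Subgroup.zpowers c ⊔ (⊤ : Subgroup G).lowerCentralSeries 2 :=
    ⟨_, rfl⟩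
  have hxc2 : ∀ x : G, ⁅x, c⁆ ∈ (⊤ : Subgroup G).lowerCentralSeries 2 := by
    intro x
    rw [show ⁅x,c⁆ = ⁅c,x⁆⁻¹ from (commutatorElement_inv c x).symm]
    exact Subgroup.inv_mem _ (mem2 c hcΓ x)
  have hDnormal : D.Normal := by
    constructor
    intro m hm x
    rw [hD] at hm ⊢
    have hm2 : m ∈ ((Subgroup.zpowers c : Set G) * ((⊤ : Subgroup G).lowerCentralSeries 2 : Set G)) := by
      rw [← Subgroup.mul_normal]; exact hm
    obtain ⟨a, ha, b, hb, rfl⟩ := Set.mem_mul.mp hm2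
    obtain ⟨i, hi⟩ := Subgroup.mem_zpowers_iff.mp ha
    have hxa : x * a * x⁻¹ ∈ Subgroup.zpowers c ⊔ (⊤ : Subgroup G).lowerCentralSeries 2 := by
      rw [← hi, show x * c^i * x⁻¹ = (x*c*x⁻¹)^i from conj_zpow.symm, conj_eq_comm x c]
      exact Subgroup.zpow_mem _ (Subgroup.mul_mem _
        (Subgroup.mem_sup_right (hxc2 x))
        (Subgroup.mem_sup_left (Subgroup.mem_zpowers c))) i
    have hxb : x * b * x⁻¹ ∈ Subgroup.zpowers c ⊔ (⊤ : Subgroup G).lowerCentralSeries 2 :=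
      Subgroup.mem_sup_right ((Subgroup.lowerCentralSeries_normal ⊤ 2).conj_mem b hb x)
    rw [show x*(a*b)*x⁻¹ = (x*a*x⁻¹)*(x*b*x⁻¹) by group]
    exact Subgroup.mul_mem _ hxa hxb
  have hcD : c ∈ D := hD ▸ Subgroup.mem_sup_left (Subgroup.mem_zpowers c)
  have hΓD : (⊤ : Subgroup G).lowerCentralSeries 1 ≤ D := by
    have habelQ : ∀ a b : G, ⁅a,b⁆ ∈ D := by
      intro a b
      have hgenQ : Subgroup.closure {QuotientGroup.mk' D g, QuotientGroup.mk' D k}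
          = (⊤ : Subgroup (G ⧸ D)) := by
        rw [← Set.image_pair, ← MonoidHom.map_closure, hgen]
        exact Subgroup.map_top_of_surjective _ (QuotientGroup.mk'_surjective D)
      have hcommQ : QuotientGroup.mk' D g * QuotientGroup.mk' D k
          = QuotientGroup.mk' D k * QuotientGroup.mk' D g := by
        refine commutatorElement_eq_one_iff_mul_comm.mp ?_
        rw [← map_commutatorElement, ← hc]
        exact (QuotientGroup.eq_one_iff c).mpr hcD
      have habQ := abelian_of_two_commuting_gens hgenQ hcommQ
        (QuotientGroup.mk' D a) (QuotientGroup.mk' D b)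
      have : QuotientGroup.mk' D ⁅a,b⁆ = 1 := by
        rw [map_commutatorElement]
        exact commutatorElement_eq_one_iff_mul_comm.mpr habQ
      exact (QuotientGroup.eq_one_iff _).mp this
    show ⁅(⊤ : Subgroup G), ⊤⁆ ≤ D
    rw [Subgroup.commutator_le]
    intro a _ b _
    exact habelQ a b
  intro u hu
  have huD : u ∈ ((Subgroup.zpowers c : Set G) * ((⊤ : Subgroup G).lowerCentralSeries 2 : Set G)) := by
    rw [← Subgroup.mul_normal]
    exact hD ▸ hΓD hu
  obtain ⟨a, ha, b, hb, rfl⟩ := Set.mem_mul.mp huD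
  obtain ⟨i, hi⟩ := Subgroup.mem_zpowers_iff.mp ha
  have hbg3 : ⁅b,g⁆ ∈ (⊤ : Subgroup G).lowerCentralSeries 3 := mem3 b hb g
  have e1 : ⁅a * b, g⁆ = ⁅b,g⁆ * ⁅c,g⁆^i := by
    rw [comm_mul_left a b g, ← hi, comm_zpow c g (by rw [← hy]; exact hyc.symm) i,
      conj_of_comm ((hcent ⁅b,g⁆ hbg3 (c^i)))]
  rw [e1, comm_mul_left ⁅b,g⁆ (⁅c,g⁆^i) k,
    comm_zpow ⁅c,g⁆ k (by rw [← hy, ← hw₁]; exact (hw₁x y).symm) i,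
    show ⁅⁅c,g⁆,k⁆ = 1 by rw [← hy, ← hw₁]; exact hw₁1, one_zpow,
    show ⁅⁅b,g⁆,k⁆ = 1 from commutatorElement_eq_one_iff_mul_comm.mpr
      (hcent ⁅b,g⁆ hbg3 k)]
  group


private theorem aux (p : ℕ) (hp : p.Prime) :
    ∀ n : ℕ, ∀ (G : Type u) (_ : Group G) (_ : Finite G), IsPGroup p G →
      (∀ H : Subgroup G, H ≠ ⊤ → (⊤ : Subgroup H).lowerCentralSeries 2 = ⊥) →
      Nat.card G = n → (⊤ : Subgroup G).lowerCentralSeries 3 = ⊥ := by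
  intro n
  induction n using Nat.strong_induction_on with
  | _ n IH =>
    intro G _ _ hG h hn
    rcases subsingleton_or_nontrivial G with hs | hnt
    · exact (Subgroup.eq_bot_iff_forall _).mpr fun x _ => Subsingleton.elim x 1
    haveI := Fact.mk hp
    -- Step 1: γ₄(G) ≤ Z(G), by induction on the order via the central quotient
    have hcent3 : (⊤ : Subgroup G).lowerCentralSeries 3 ≤ Subgroup.center G := by
      haveI hZ : Nontrivial (Subgroup.center G) := hG.center_nontrivial
      have hcards : Nat.card (G ⧸ Subgroup.center G) < n := by
        have h1 : Nat.card G = Nat.card (G ⧸ Subgroup.center G) * Nat.card (Subgroup.center G) :=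
          Subgroup.card_eq_card_quotient_mul_card_subgroup _
      
        have h2 : 1 < Nat.card (Subgroup.center G) := Finite.one_lt_card
        have h3 : 0 < Nat.card (G ⧸ Subgroup.center G) := Nat.card_pos
        calc Nat.card (G ⧸ Subgroup.center G)
            < Nat.card (G ⧸ Subgroup.center G) * Nat.card (Subgroup.center G) :=
              lt_mul_of_one_lt_right h3 h2
        _ = n := by rw [← h1, hn]
      have hq : ∀ H' : Subgroup (G ⧸ Subgroup.center G), H' ≠ ⊤ →
          (⊤ : Subgroup H').lowerCentralSeries 2 = ⊥ := by
        intro H' hH'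
        have hsur : Function.Surjective (QuotientGroup.mk' (Subgroup.center G)) :=
          QuotientGroup.mk'_surjective _
        have hmap : Subgroup.map (QuotientGroup.mk' (Subgroup.center G))
            (Subgroup.comap (QuotientGroup.mk' (Subgroup.center G)) H') = H' :=
          Subgroup.map_comap_eq_self_of_surjective hsur H'
        have hHcne : Subgroup.comap (QuotientGroup.mk' (Subgroup.center G)) H' ≠ ⊤ := by
          intro hteq
          exact hH' (by rw [← hmap, hteq, Subgroup.map_top_of_surjective _ hsur])
        have h2' := h _ hHcne
        have hf := (QuotientGroup.mk' (Subgroup.center G)).subgroupMap_surjective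
          (Subgroup.comap (QuotientGroup.mk' (Subgroup.center G)) H')
        have hle := lcs_le_map_of_surjective _ hf 2
        rw [h2', Subgroup.map_bot, le_bot_iff] at hle
        rw [← hmap]
        exact hle
      have hq3 := IH _ hcards (G ⧸ Subgroup.center G) inferInstance inferInstance
        (hG.to_quotient _) hq rfl
      have hle := Subgroup.lowerCentralSeries.map (QuotientGroup.mk' (Subgroup.center G)) 3
      rw [hq3, le_bot_iff, Subgroup.map_eq_bot_iff, QuotientGroup.ker_mk'] at hle
      exact hle
    -- Step 2: reduce to γ₃(G) ≤ Z(G)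
    suffices hsuff : (⊤ : Subgroup G).lowerCentralSeries 2 ≤ Subgroup.center G by
      exact Subgroup.lowerCentralSeries_succ_eq_bot _ hsuff
    by_cases hab : ∃ t : G, Subgroup.zpowers t = ⊤
    · -- cyclic, hence abelian
      obtain ⟨t, ht⟩ := hab
      have hcomm : ∀ a b : G, a * b = b * a := by
        intro a b
        obtain ⟨i, hi⟩ := Subgroup.mem_zpowers_iff.mp (ht ▸ Subgroup.mem_top a)
        obtain ⟨j, hj⟩ := Subgroup.mem_zpowers_iff.mp (ht ▸ Subgroup.mem_top b)
        rw [← hi, ← hj, ← zpow_add, ← zpow_add, add_comm]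
      have h1 : (⊤ : Subgroup G).lowerCentralSeries 1 = ⊥ := by
        rw [eq_bot_iff]
        show ⁅(⊤ : Subgroup G), ⊤⁆ ≤ ⊥
        rw [Subgroup.commutator_le]
        intro a _ b _
        rw [Subgroup.mem_bot]
        exact commutatorElement_eq_one_iff_mul_comm.mpr (hcomm a b)
      have h2 : (⊤ : Subgroup G).lowerCentralSeries 2 ≤ (⊤ : Subgroup G).lowerCentralSeries 1 :=
        Subgroup.lowerCentralSeries_antitone _ (by norm_num)
      rw [h1] at h2
      exact h2.trans bot_le
    · push_neg at hab
      -- G is not cyclic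
      have hL1 : ∀ K : Subgroup G, K ⊔ (⊤ : Subgroup G).lowerCentralSeries 1 = ⊤ → K = ⊤ := by
        intro K hK
        by_contra hKne
        haveI : Finite (Subgroup G) := Finite.of_injective _ SetLike.coe_injective
        rcases (Finite.to_isCoatomic (α := Subgroup G)).eq_top_or_exists_le_coatom K with
          hc | ⟨M, hM, hKM⟩
        · exact hKne hc
        haveI hMn : M.Normal := by
          have hnc : NormalizerCondition G := by
            haveI : Group.IsNilpotent G := hG.isNilpotent
            exact normalizerCondition_of_isNilpotent
          exact Subgroup.NormalizerCondition.normal_of_coatom M hnc hM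
        have hΓM : (⊤ : Subgroup G).lowerCentralSeries 1 ≤ M := by
          obtain ⟨x₀, hx₀⟩ : ∃ x : G, x ∉ M := by
            by_contra hall
            push_neg at hall
            exact hM.1 ((Subgroup.eq_top_iff' M).mpr hall)
          haveI : Nontrivial (G ⧸ M) :=
            ⟨⟨QuotientGroup.mk x₀, 1, fun he => hx₀ ((QuotientGroup.eq_one_iff x₀).mp he)⟩⟩
          haveI hZQ : Nontrivial (Subgroup.center (G ⧸ M)) :=
            (hG.to_quotient M).center_nontrivial
          obtain ⟨ζ, hζ⟩ := exists_ne (1 : Subgroup.center (G ⧸ M))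
          obtain ⟨x₁, hx₁⟩ := QuotientGroup.mk'_surjective M (ζ : G ⧸ M)
          have hC : Subgroup.comap (QuotientGroup.mk' M) (Subgroup.center (G ⧸ M)) = ⊤ := by
            apply hM.2
            refine lt_of_le_of_ne ?_ ?_
            · intro m hm
              refine Subgroup.mem_comap.mpr ?_
              rw [show (QuotientGroup.mk' M) m = 1 from (QuotientGroup.eq_one_iff m).mpr hm]
              exact Subgroup.one_mem _
            · intro heq
              have hx₁C : x₁ ∈ Subgroup.comap (QuotientGroup.mk' M) (Subgroup.center (G ⧸ M)) :=
                Subgroup.mem_comap.mpr (by rw [hx₁]; exact ζ.2)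
              rw [← heq] at hx₁C
              apply hζ
              ext
              rw [← hx₁]
              exact (QuotientGroup.eq_one_iff x₁).mpr hx₁C
          show ⁅(⊤ : Subgroup G), ⊤⁆ ≤ M
          rw [Subgroup.commutator_le]
          intro a _ b _
          have haC : (QuotientGroup.mk' M) a ∈ Subgroup.center (G ⧸ M) :=
            Subgroup.mem_comap.mp (hC.symm ▸ Subgroup.mem_top a)
          refine (QuotientGroup.eq_one_iff _).mp ?_
          rw [show ((⁅a,b⁆ : G) : G ⧸ M) = (QuotientGroup.mk' M) ⁅a,b⁆ from rfl,
            map_commutatorElement]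
          exact commutatorElement_eq_one_iff_mul_comm.mpr
            ((Subgroup.mem_center_iff.mp haC _).symm)
        have : (⊤ : Subgroup G) ≤ M := hK ▸ sup_le hKM hΓM
        exact hM.1 (top_le_iff.mp this)
      have hL1' : ∀ x : G, Subgroup.zpowers x ⊔ (⊤ : Subgroup G).lowerCentralSeries 1 ≠ ⊤ :=
        fun x hx => hab x (hL1 _ hx)
      have hL2 : ∀ x yy : G,
          Subgroup.zpowers yy ⊔ Subgroup.zpowers (x^p) ⊔ (⊤ : Subgroup G).lowerCentralSeries 1 ≠ ⊤ := by
        intro x yy htop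
        have hTn : (Subgroup.zpowers yy ⊔ (⊤ : Subgroup G).lowerCentralSeries 1).Normal := by
          constructor
          intro m hm x'
          have h1 : ⁅x', m⁆ ∈ Subgroup.zpowers yy ⊔ (⊤ : Subgroup G).lowerCentralSeries 1 :=
            Subgroup.mem_sup_right (commutator_mem_commutator (Subgroup.mem_top x')
              (Subgroup.mem_top m) : ⁅x',m⁆ ∈ ⁅(⊤ : Subgroup G), ⊤⁆)
          rw [conj_eq_comm x' m]
          exact Subgroup.mul_mem _ h1 hm
        set T := Subgroup.zpowers yy ⊔ (⊤ : Subgroup G).lowerCentralSeries 1 with hTdef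
        have hsurj : Function.Surjective (QuotientGroup.mk' T) := QuotientGroup.mk'_surjective T
        have hyyT : yy ∈ T := Subgroup.mem_sup_left (Subgroup.mem_zpowers yy)
        have hΓT : (⊤ : Subgroup G).lowerCentralSeries 1 ≤ T := le_sup_right
        have htop' : Subgroup.zpowers ((QuotientGroup.mk' T) (x^p)) = ⊤ := by
          have hmap : Subgroup.map (QuotientGroup.mk' T)
              (Subgroup.zpowers yy ⊔ Subgroup.zpowers (x^p) ⊔ (⊤ : Subgroup G).lowerCentralSeries 1) = ⊤ := by
            rw [htop]
            exact Subgroup.map_top_of_surjective _ hsurj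
          rw [Subgroup.map_sup, Subgroup.map_sup, MonoidHom.map_zpowers, MonoidHom.map_zpowers,
            show (QuotientGroup.mk' T) yy = 1 from (QuotientGroup.eq_one_iff yy).mpr hyyT,
            show Subgroup.map (QuotientGroup.mk' T) ((⊤ : Subgroup G).lowerCentralSeries 1) = ⊥ by
              rw [Subgroup.map_eq_bot_iff, QuotientGroup.ker_mk']; exact hΓT,
            Subgroup.zpowers_one_eq_bot, bot_sup_eq, sup_bot_eq] at hmap
          exact hmap
        have hq : (QuotientGroup.mk' T) x ∈ Subgroup.zpowers (((QuotientGroup.mk' T) x)^p) := by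
          rw [← map_pow, htop']
          exact Subgroup.mem_top _
        obtain ⟨j, hj⟩ := Subgroup.mem_zpowers_iff.mp hq
        obtain ⟨kk, hkk⟩ := (hG.to_quotient T) ((QuotientGroup.mk' T) x)
        have hx1 : (QuotientGroup.mk' T) x = 1 := by
          have h1 : orderOf ((QuotientGroup.mk' T) x) ∣ p^kk := orderOf_dvd_of_pow_eq_one hkk
          obtain ⟨m, hmle, hordeq⟩ := (Nat.dvd_prime_pow hp).mp h1
          rcases Nat.eq_zero_or_pos m with hm0 | hmpos
          · rw [hm0, pow_zero] at hordeq
            exact orderOf_eq_one_iff.mp hordeq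
          · exfalso
            have hdvd : (orderOf ((QuotientGroup.mk' T) x) : ℤ) ∣ ((p : ℤ)*j - 1) := by
              rw [orderOf_dvd_iff_zpow_eq_one]
              have hpj : ((QuotientGroup.mk' T) x)^((p:ℤ)*j) = (QuotientGroup.mk' T) x := by
                rw [zpow_mul, zpow_natCast]
                exact hj
              rw [zpow_sub, hpj, zpow_one, mul_inv_cancel]
            have hpdvd : (p:ℤ) ∣ (orderOf ((QuotientGroup.mk' T) x) : ℤ) := by
              rw [hordeq]
              push_cast
              exact dvd_pow_self (p : ℤ) hmpos.ne'
            have hp1 : (p:ℤ) ∣ 1 := by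
              have h2 : (p:ℤ) ∣ ((p:ℤ)*j - 1) := hpdvd.trans hdvd
              have h3 : (p:ℤ) ∣ (p:ℤ)*j := Dvd.intro j rfl
              have := dvd_sub h3 h2
              simpa using this
            have := Int.le_of_dvd one_pos hp1
            have h4 := hp.two_le
            omega
        have hxT : x ∈ T := (QuotientGroup.eq_one_iff x).mp hx1
        have hsub : Subgroup.zpowers yy ⊔ Subgroup.zpowers (x^p) ⊔ (⊤ : Subgroup G).lowerCentralSeries 1 ≤ T := by
          refine sup_le (sup_le ?_ ?_) hΓT
          · exact le_sup_left
          · rw [Subgroup.zpowers_le]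
            exact Subgroup.pow_mem _ hxT p
        rw [htop] at hsub
        exact hab yy (hL1 _ (top_le_iff.mp hsub))
      have hF1 : ∀ m ∈ (⊤ : Subgroup G).lowerCentralSeries 2, ∀ u ∈ (⊤ : Subgroup G).lowerCentralSeries 1, m * u = u * m := by
        have hF1' : (⊤ : Subgroup G).lowerCentralSeries 2 ≤
            Subgroup.centralizer ((⊤ : Subgroup G).lowerCentralSeries 1 : Set G) := by
          show ⁅(⊤ : Subgroup G).lowerCentralSeries 1, ⊤⁆ ≤ _
          rw [Subgroup.commutator_le]
          intro a ha b _
          rw [Subgroup.mem_centralizer_iff]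
          intro u hu
          have h1 : ⁅⁅a,b⁆,u⁆ = 1 :=
            keyElt h (hL1' b) (Subgroup.mem_sup_right ha)
              (Subgroup.mem_sup_left (Subgroup.mem_zpowers b)) (Subgroup.mem_sup_right hu)
          exact (commutatorElement_eq_one_iff_mul_comm.mp h1).symm
        intro m hm u hu
        exact (Subgroup.mem_centralizer_iff.mp (hF1' hm) u hu).symm
      -- conclude via core
      show ⁅(⊤ : Subgroup G).lowerCentralSeries 1, ⊤⁆ ≤ Subgroup.center G
      rw [Subgroup.commutator_le]
      intro u hu x _
      rw [Subgroup.mem_center_iff]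
      intro q
      by_cases hxq : Subgroup.closure {x, q} ⊔ (⊤ : Subgroup G).lowerCentralSeries 1 = ⊤
      · have hgen : Subgroup.closure {x, q} = ⊤ := hL1 _ hxq
        have h1 := core h hp hG hL1' hL2 hF1 hcent3 x q hgen u hu
        exact (commutatorElement_eq_one_iff_mul_comm.mp h1).symm
      · have h1 : ⁅⁅u,x⁆,q⁆ = 1 :=
          keyElt h hxq (Subgroup.mem_sup_right hu)
            (Subgroup.mem_sup_left (Subgroup.subset_closure (by simp)))
            (Subgroup.mem_sup_left (Subgroup.subset_closure (by simp)))
        exact (commutatorElement_eq_one_iff_mul_comm.mp h1).symm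

end ClassLeThreeAux

/-- If every proper subgroup of a finite `p`-group `G` is nilpotent of class
at most `2`, then `G` is nilpotent of class at most `3`. -/
theorem class_le_three_of_proper_class_le_two (p : ℕ) (hp : p.Prime) (G : Type*) [Group G]
    [Finite G] (hG : IsPGroup p G)
    (h : ∀ H : Subgroup G, H ≠ ⊤ → (⊤ : Subgroup H).lowerCentralSeries 2 = ⊥) :
    (⊤ : Subgroup G).lowerCentralSeries 3 = ⊥ :=
  ClassLeThreeAux.aux p hp (Nat.card G) G inferInstance inferInstance hG h rfl
end

section
/- Let p be a prime, t ≥ 1, and let G be a finite non-abelian p-group that has an abelian subgroup of index p and in which every non-abelian subgroup can be generated by two elements. Then G is an A_t-group if and only if the nilpotency class of G equals t + 1. -/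
set_option linter.unusedSectionVars false
set_option maxHeartbeats 1000000

/-- A finite `p`-group `G` is an `A_t`-group if every subgroup of index `p^t` is abelian
and at least one subgroup of index `p^(t-1)` is non-abelian. -/
def IsAtGroup (p t : ℕ) (G : Type*) [Group G] : Prop :=
  (∀ H : Subgroup G, H.index = p ^ t → ∀ x ∈ H, ∀ y ∈ H, x * y = y * x) ∧
  ∃ H : Subgroup G, H.index = p ^ (t - 1) ∧ ¬ ∀ x ∈ H, ∀ y ∈ H, x * y = y * x

namespace AtProof


open Subgroup
open scoped commutatorElement

variable {G : Type*} [Group G]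

/-- Relative lower central series of a subgroup. -/
def fser (K : Subgroup G) : ℕ → Subgroup G
  | 0 => K
  | n + 1 => ⁅fser K n, K⁆

lemma fser_zero (K : Subgroup G) : fser K 0 = K := rfl

lemma fser_succ (K : Subgroup G) (n : ℕ) : fser K (n + 1) = ⁅fser K n, K⁆ := rfl

lemma fser_top (n : ℕ) : fser (⊤ : Subgroup G) n = (⊤ : Subgroup G).lowerCentralSeries n := by
  induction n with
  | zero => rfl
  | succ n ih => rw [fser_succ, ih]; rfl


lemma bezout_mem {p : ℕ} (hp : p.Prime) {L : Subgroup G} {g : G} (hgp : g ^ p ∈ L)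
    {k : ℤ} (hgk : g ^ k ∈ L) (hk : ¬ (p : ℤ) ∣ k) : g ∈ L := by
  have hnd : ¬ p ∣ k.natAbs := by
    intro h
    apply hk
    have : ((p : ℤ)).natAbs ∣ k.natAbs := by simpa using h
    exact Int.natAbs_dvd_natAbs.mp this
  have hcop : Nat.gcd p k.natAbs = 1 := (hp.coprime_iff_not_dvd).mpr hnd
  have hg1 : Int.gcd (p : ℤ) k = 1 := by
    simp only [Int.gcd, Int.natAbs_natCast]
    exact hcop
  have hb := Int.gcd_eq_gcd_ab (p : ℤ) k
  rw [hg1] at hb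
  have hgeq : g = (g ^ (p : ℤ)) ^ (Int.gcdA (p : ℤ) k) * (g ^ k) ^ (Int.gcdB (p : ℤ) k) := by
    rw [← zpow_mul, ← zpow_mul, ← zpow_add, ← hb]
    simp
  rw [hgeq]
  refine mul_mem (zpow_mem ?_ _) (zpow_mem hgk _)
  rw [zpow_natCast]
  exact hgp

lemma nonab_pair {H : Subgroup G} (h : ¬ ∀ x ∈ H, ∀ y ∈ H, x * y = y * x) :
    ∃ u ∈ H, ∃ v ∈ H, u * v ≠ v * u := by
  push_neg at h; exact h

lemma fser_one_ne_bot {H : Subgroup G} (h : ¬ ∀ x ∈ H, ∀ y ∈ H, x * y = y * x) :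
    fser H 1 ≠ ⊥ := by
  obtain ⟨u, hu, v, hv, huv⟩ := nonab_pair h
  intro hb
  have : ⁅u, v⁆ ∈ fser H 1 := Subgroup.commutator_mem_commutator hu hv
  rw [hb, Subgroup.mem_bot] at this
  exact huv (commutatorElement_eq_one_iff_mul_comm.mp this)

section PGroup

variable [Finite G] {p : ℕ} (hp : p.Prime) (hG : IsPGroup p G)

include hp hG in
lemma normal_of_index_p {J : Subgroup G} (hJ : J.index = p) : J.Normal := by
  haveI : Fact p.Prime := ⟨hp⟩
  haveI := hG.isNilpotent
  have hnc : NormalizerCondition G := normalizerCondition_of_isNilpotent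
  have hJne : J ≠ ⊤ := by
    intro h; rw [h, Subgroup.index_top] at hJ; exact hp.one_lt.ne hJ
  have hlt : J < Subgroup.normalizer (J : Set G) := hnc J (lt_top_iff_ne_top.mpr hJne)
  have hdvd : (Subgroup.normalizer (J : Set G)).index ∣ p := by
    rw [← hJ]; exact Dvd.intro_left _ (Subgroup.relIndex_mul_index hlt.le)
  rcases (Nat.dvd_prime hp).mp hdvd with h1 | h1
  · exact Subgroup.normalizer_eq_top_iff.mp (Subgroup.index_eq_one.mp h1)
  · exfalso
    have h2 : J.relIndex (Subgroup.normalizer (J : Set G)) * p = 1 * p := by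
      rw [one_mul, ← h1 , Subgroup.relIndex_mul_index hlt.le, hJ, h1]
    have h3 : J.relIndex (Subgroup.normalizer (J : Set G)) = 1 := Nat.eq_of_mul_eq_mul_right hp.pos h2
    exact hlt.ne ((Subgroup.relIndex_eq_one.mp h3).antisymm hlt.le).symm

include hp hG in
lemma pow_p_mem_of_index_p {J : Subgroup G} (hJ : J.index = p) (g : G) : g ^ p ∈ J := by
  haveI := normal_of_index_p hp hG hJ
  have hcard : Nat.card (G ⧸ J) = p := by rw [← hJ]; rfl
  have h1 : ((g : G ⧸ J)) ^ p = 1 := by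
    rw [← hcard]; exact pow_card_eq_one'
  rw [← QuotientGroup.mk_pow J g p, QuotientGroup.eq_one_iff] at h1
  exact h1

include hp hG in
lemma commutator_mem_of_index_p {J : Subgroup G} (hJ : J.index = p) (g h : G) :
    ⁅g, h⁆ ∈ J := by
  haveI := normal_of_index_p hp hG hJ
  haveI : Fact p.Prime := ⟨hp⟩
  have hcard : Nat.card (G ⧸ J) = p := by rw [← hJ]; rfl
  haveI := isCyclic_of_prime_card hcard
  letI := IsCyclic.commGroup (α := G ⧸ J)
  have h1 : ((⁅g, h⁆ : G) : G ⧸ J) = 1 := by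
    have : ((⁅g, h⁆ : G) : G ⧸ J) = ⁅(g : G ⧸ J), (h : G ⧸ J)⁆ :=
      map_commutatorElement (QuotientGroup.mk' J) g h
    rw [this, commutatorElement_eq_one_iff_mul_comm]
    exact mul_comm _ _
  exact (QuotientGroup.eq_one_iff _).mp h1

include hp hG in
lemma exists_index_p_above {Q : Subgroup G} (hQ : Q ≠ ⊤) :
    ∃ T : Subgroup G, Q ≤ T ∧ T.index = p := by
  haveI : Fact p.Prime := ⟨hp⟩
  obtain ⟨n, hn⟩ : ∃ n, Q.index = n := ⟨_, rfl⟩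
  induction n using Nat.strong_induction_on generalizing Q with
  | _ n ih =>
  by_cases hint : ∃ R : Subgroup G, Q < R ∧ R < ⊤
  · obtain ⟨R, hQR, hRtop⟩ := hint
    have hRne : R ≠ ⊤ := hRtop.ne
    have hidx : R.index < n := by
      rw [← hn]
      have hmul := Subgroup.relIndex_mul_index hQR.le
      have hrel : Q.relIndex R ≠ 1 := by
        intro h1; exact hQR.ne ((Subgroup.relIndex_eq_one.mp h1).antisymm hQR.le).symm
      have hrel0 : Q.relIndex R ≠ 0 := by
        intro h0
        have := Subgroup.index_ne_zero_of_finite (H := Q)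
        rw [← hmul, h0, zero_mul] at this; exact this rfl
      have hR0 : R.index ≠ 0 := Subgroup.index_ne_zero_of_finite
      calc R.index < Q.relIndex R * R.index := by
            have : 2 ≤ Q.relIndex R := by omega
            nlinarith [Nat.pos_of_ne_zero hR0]
        _ = Q.index := hmul
    obtain ⟨T, hT1, hT2⟩ := ih R.index hidx hRne rfl
    exact ⟨T, hQR.le.trans hT1, hT2⟩
  · -- Q is maximal
    push_neg at hint
    haveI := hG.isNilpotent
    have hnc : NormalizerCondition G := normalizerCondition_of_isNilpotent
    have hntop : Subgroup.normalizer (Q : Set G) = ⊤ := by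
      have hlt := hnc Q (lt_top_iff_ne_top.mpr hQ)
      have hnot : ¬ Subgroup.normalizer (Q : Set G) < ⊤ := hint _ hlt
      exact not_ne_iff.mp (fun h => hnot (lt_top_iff_ne_top.mpr h))
    haveI : Q.Normal := Subgroup.normalizer_eq_top_iff.mp hntop
    haveI : Nontrivial (G ⧸ Q) := by
      obtain ⟨g, hg⟩ : ∃ g, g ∉ Q := by
        by_contra hall; push_neg at hall
        exact hQ ((Subgroup.eq_top_iff' Q).mpr hall)
      exact ⟨⟨(g : G ⧸ Q), 1, by rwa [ne_eq, QuotientGroup.eq_one_iff]⟩⟩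
    have hpQ : IsPGroup p (G ⧸ Q) := hG.to_quotient Q
    have hdvd : p ∣ Nat.card (G ⧸ Q) := by
      obtain ⟨k, hk⟩ := IsPGroup.iff_card.mp hpQ
      have hk1 : k ≠ 0 := by
        rintro rfl
        rw [pow_zero] at hk
        exact (Finite.one_lt_card (α := G ⧸ Q)).ne' hk
      rw [hk]; exact dvd_pow_self p hk1
    obtain ⟨g, hg⟩ := exists_prime_orderOf_dvd_card' p hdvd
    set R' : Subgroup G := (Subgroup.zpowers g).comap (QuotientGroup.mk' Q) with hR'
    have hQR' : Q ≤ R' := by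
      intro q hq
      simp only [hR', Subgroup.mem_comap]
      have : (QuotientGroup.mk' Q) q = 1 := (QuotientGroup.eq_one_iff q).mpr hq
      rw [this]; exact one_mem _
    have hQneR' : Q ≠ R' := by
      intro h
      obtain ⟨g₀, hg₀⟩ := QuotientGroup.mk'_surjective Q g
      have hg₀R' : g₀ ∈ R' := by
        simp only [hR', Subgroup.mem_comap, hg₀]; exact Subgroup.mem_zpowers g
      rw [← h] at hg₀R'
      have : g = 1 := by rw [← hg₀]; exact (QuotientGroup.eq_one_iff g₀).mpr hg₀R'
      rw [this, orderOf_one] at hg; exact hp.one_lt.ne' hg.symm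
    have hR'top : R' = ⊤ := by
      have hnot : ¬ R' < ⊤ := hint R' (hQR'.lt_of_ne hQneR')
      exact not_ne_iff.mp (fun h => hnot (lt_top_iff_ne_top.mpr h))
    have hztop : Subgroup.zpowers g = ⊤ := by
      have h1 : R'.map (QuotientGroup.mk' Q) = Subgroup.zpowers g :=
        Subgroup.map_comap_eq_self_of_surjective (QuotientGroup.mk'_surjective Q) _
      rw [hR'top] at h1
      rw [← h1, ← MonoidHom.range_eq_map]
      exact MonoidHom.range_eq_top.mpr (QuotientGroup.mk'_surjective Q)
    have hcard : Nat.card (G ⧸ Q) = p := by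
      rw [← hg, ← Nat.card_zpowers g, hztop]
      exact (Nat.card_congr Subgroup.topEquiv.toEquiv).symm
    exact ⟨Q, le_refl Q, by rw [Subgroup.index_eq_card, hcard]⟩

include hp hG in
lemma exists_above_index_pow {K : Subgroup G} :
    ∀ m : ℕ, p ^ m ∣ K.index → ∃ L : Subgroup G, K ≤ L ∧ L.index = p ^ m := by
  intro m
  induction m generalizing K with
  | zero => intro _; exact ⟨⊤, le_top, by simp⟩
  | succ m ih =>
    intro hdvd
    obtain ⟨L', hKL', hL'⟩ := ih ((pow_dvd_pow p (Nat.le_succ m)).trans hdvd)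
    have hne : K ≠ L' := by
      rintro rfl
      rw [hL'] at hdvd
      exact absurd ((Nat.pow_dvd_pow_iff_le_right hp.one_lt).mp hdvd) (by omega)
    have hKs : K.subgroupOf L' ≠ ⊤ := by
      intro h
      exact hne (le_antisymm hKL' (Subgroup.subgroupOf_eq_top.mp h))
    obtain ⟨T', hT1, hT2⟩ := exists_index_p_above hp (hG.to_subgroup L') hKs
    refine ⟨T'.map L'.subtype, ?_, ?_⟩
    · have : K = (K.subgroupOf L').map L'.subtype := by
        rw [Subgroup.subgroupOf_map_subtype, inf_eq_left.mpr hKL']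
      rw [this]; exact Subgroup.map_mono hT1
    · rw [Subgroup.index_map_subtype, hT2, hL', pow_succ, Nat.mul_comm]


include hp hG in
lemma card_step_of_ne {J1 J2 : Subgroup G} (hle : J1 ≤ J2) (hne : J1 ≠ J2) :
    p * Nat.card ↥J1 ≤ Nat.card ↥J2 := by
  haveI : Fact p.Prime := ⟨hp⟩
  haveI : (J1.subgroupOf J2).FiniteIndex := ⟨Subgroup.index_ne_zero_of_finite⟩
  obtain ⟨k, hk⟩ := (hG.to_subgroup J2).index (J1.subgroupOf J2)
  have hk1 : k ≠ 0 := by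
    rintro rfl
    rw [pow_zero] at hk
    exact hne (le_antisymm hle (Subgroup.subgroupOf_eq_top.mp (Subgroup.index_eq_one.mp hk)))
  have h3 := Subgroup.card_mul_index (J1.subgroupOf J2)
  have h4 : Nat.card ↥(J1.subgroupOf J2) = Nat.card ↥J1 :=
    Nat.card_congr (Subgroup.subgroupOfEquivOfLe hle).toEquiv
  have h5 : p ≤ p ^ k := Nat.le_self_pow hk1 p
  calc p * Nat.card ↥J1 ≤ p ^ k * Nat.card ↥J1 := Nat.mul_le_mul_right _ h5
    _ = Nat.card ↥J2 := by rw [← h4, Nat.mul_comm, ← hk, h3]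

end PGroup



/-- The commutator map `u ↦ ⁅u, y⁆`. -/
def psi (y u : G) : G := ⁅u, y⁆

lemma psi_def (y u : G) : psi y u = u * y * u⁻¹ * y⁻¹ := rfl

section Basic

variable {A : Subgroup G} (hA : A.Normal)
  (hAab : ∀ x ∈ A, ∀ y ∈ A, x * y = y * x)

lemma conj_mem_A (hA : A.Normal) {u : G} (hu : u ∈ A) (z : G) : z * u * z⁻¹ ∈ A :=
  hA.conj_mem u hu z

include hA in
lemma psi_mem (y : G) {u : G} (hu : u ∈ A) : psi y u ∈ A := by
  have h : psi y u = u * (y * u⁻¹ * y⁻¹) := by rw [psi_def]; group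
  rw [h]
  exact mul_mem hu (conj_mem_A hA (inv_mem hu) y)

include hA hAab in
lemma psi_mul (y : G) {u v : G} (hu : u ∈ A) (hv : v ∈ A) :
    psi y (u * v) = psi y u * psi y v := by
  have h1 : psi y v ∈ A := psi_mem hA y hv
  have h2 : y * u⁻¹ * y⁻¹ ∈ A := conj_mem_A hA (inv_mem hu) y
  have hsw : psi y v * (y * u⁻¹ * y⁻¹) = (y * u⁻¹ * y⁻¹) * psi y v := hAab _ h1 _ h2
  calc psi y (u * v) = u * (psi y v * (y * u⁻¹ * y⁻¹)) := by simp only [psi_def]; group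
    _ = u * ((y * u⁻¹ * y⁻¹) * psi y v) := by rw [hsw]
    _ = psi y u * psi y v := by simp only [psi_def]; group

lemma psi_one (y : G) : psi y 1 = 1 := by simp [psi_def]

lemma psi_iter_one (y : G) (n : ℕ) : (psi y)^[n] 1 = 1 := by
  induction n with
  | zero => rfl
  | succ n ih => rw [Function.iterate_succ_apply, psi_one]; exact ih

include hA in
lemma psi_iter_mem (y : G) (n : ℕ) {u : G} (hu : u ∈ A) : (psi y)^[n] u ∈ A := by
  induction n with
  | zero => exact hu
  | succ n ih => rw [Function.iterate_succ_apply']; exact psi_mem hA y ih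

include hA hAab in
lemma psi_iter_mul (y : G) (n : ℕ) {u v : G} (hu : u ∈ A) (hv : v ∈ A) :
    (psi y)^[n] (u * v) = (psi y)^[n] u * (psi y)^[n] v := by
  induction n with
  | zero => rfl
  | succ n ih =>
    rw [Function.iterate_succ_apply', Function.iterate_succ_apply',
      Function.iterate_succ_apply', ih]
    exact psi_mul hA hAab y (psi_iter_mem hA y n hu) (psi_iter_mem hA y n hv)

include hA hAab in
lemma psi_iter_inv (y : G) (n : ℕ) {u : G} (hu : u ∈ A) :
    (psi y)^[n] u⁻¹ = ((psi y)^[n] u)⁻¹ := by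
  have h := psi_iter_mul hA hAab y n hu (inv_mem hu)
  rw [mul_inv_cancel, psi_iter_one] at h
  exact (inv_eq_of_mul_eq_one_right h.symm).symm

include hA hAab in
lemma psi_iter_pow (y : G) (n : ℕ) {u : G} (hu : u ∈ A) (k : ℕ) :
    (psi y)^[n] (u ^ k) = ((psi y)^[n] u) ^ k := by
  induction k with
  | zero => rw [pow_zero, pow_zero, psi_iter_one]
  | succ k ih =>
    rw [pow_succ, pow_succ, psi_iter_mul hA hAab y n (pow_mem hu k) hu, ih]

include hA hAab in
lemma psi_iter_zpow (y : G) (n : ℕ) {u : G} (hu : u ∈ A) (k : ℤ) :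
    (psi y)^[n] (u ^ k) = ((psi y)^[n] u) ^ k := by
  cases k with
  | ofNat k => rw [Int.ofNat_eq_coe, zpow_natCast, zpow_natCast]; exact psi_iter_pow hA hAab y n hu k
  | negSucc k =>
    rw [zpow_negSucc, zpow_negSucc, psi_iter_inv hA hAab y n (pow_mem hu _),
      psi_iter_pow hA hAab y n hu]

lemma psi_conj (y z : G) : psi y (y * z * y⁻¹) = y * psi y z * y⁻¹ := by
  simp only [psi_def]; group

lemma psi_iter_conj (y : G) (n : ℕ) (z : G) :
    (psi y)^[n] (y * z * y⁻¹) = y * (psi y)^[n] z * y⁻¹ := by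
  induction n generalizing z with
  | zero => rfl
  | succ n ih =>
    rw [Function.iterate_succ_apply, Function.iterate_succ_apply, psi_conj]
    exact ih (psi y z)

lemma conj_eq_psi_inv_mul (y w : G) : y * w * y⁻¹ = (psi y w)⁻¹ * w := by
  simp only [psi_def]; group

include hA hAab in
lemma psi_pow_eq_one_of_psi_psi_eq_one {y : G} {m : ℕ} (hym : y ^ m ∈ A)
    {z : G} (hz : z ∈ A) (h2 : psi y (psi y z) = 1) : (psi y z) ^ m = 1 := by
  have hfix : y * psi y z * y⁻¹ = psi y z := by
    rw [conj_eq_psi_inv_mul, h2, inv_one, one_mul]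
  have h4 : y * (psi y z)⁻¹ * y⁻¹ = (psi y z)⁻¹ := by
    rw [show y * (psi y z)⁻¹ * y⁻¹ = (y * psi y z * y⁻¹)⁻¹ by group, hfix]
  have h5 : ∀ j : ℕ, y * (psi y z)⁻¹ ^ j * y⁻¹ = (psi y z)⁻¹ ^ j := by
    intro j
    induction j with
    | zero => simp
    | succ j ihj =>
      calc y * (psi y z)⁻¹ ^ (j + 1) * y⁻¹
          = (y * (psi y z)⁻¹ ^ j * y⁻¹) * (y * (psi y z)⁻¹ * y⁻¹) := by
            rw [pow_succ]; group
        _ = (psi y z)⁻¹ ^ (j + 1) := by rw [ihj, h4, pow_succ]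
  have hconj : ∀ k : ℕ, y ^ k * z * (y ^ k)⁻¹ = ((psi y z)⁻¹) ^ k * z := by
    intro k
    induction k with
    | zero => simp
    | succ k ih =>
      calc y ^ (k + 1) * z * (y ^ (k + 1))⁻¹
          = y * (y ^ k * z * (y ^ k)⁻¹) * y⁻¹ := by group
        _ = y * ((psi y z)⁻¹ ^ k * z) * y⁻¹ := by rw [ih]
        _ = (y * (psi y z)⁻¹ ^ k * y⁻¹) * (y * z * y⁻¹) := by group
        _ = (psi y z)⁻¹ ^ k * ((psi y z)⁻¹ * z) := by rw [h5, conj_eq_psi_inv_mul]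
        _ = (psi y z)⁻¹ ^ (k + 1) * z := by rw [pow_succ]; group
  have hm := hconj m
  have hcomm : y ^ m * z * (y ^ m)⁻¹ = z := by
    rw [hAab _ hym _ hz]; group
  rw [hcomm] at hm
  have h6 : ((psi y z)⁻¹) ^ m = 1 := by
    calc ((psi y z)⁻¹) ^ m = ((psi y z)⁻¹ ^ m * z) * z⁻¹ := by group
      _ = z * z⁻¹ := by rw [← hm]
      _ = 1 := by group
  rw [inv_pow, inv_eq_one] at h6
  exact h6

end Basic


section NF

lemma conj_closure {S : Set G} {w : G} (h : ∀ s ∈ S, w * s * w⁻¹ ∈ Subgroup.closure S) :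
    ∀ v ∈ Subgroup.closure S, w * v * w⁻¹ ∈ Subgroup.closure S := by
  intro v hv
  induction hv using Subgroup.closure_induction with
  | mem s hs => exact h s hs
  | one => simpa using one_mem _
  | mul a b ha hb iha ihb =>
    have hab : w * (a * b) * w⁻¹ = (w * a * w⁻¹) * (w * b * w⁻¹) := by group
    rw [hab]; exact mul_mem iha ihb
  | inv a ha iha =>
    have hai : w * a⁻¹ * w⁻¹ = (w * a * w⁻¹)⁻¹ := by group
    rw [hai]; exact inv_mem iha

lemma conj_zpow_closure {S : Set G} {w : G}
    (h1 : ∀ v ∈ Subgroup.closure S, w * v * w⁻¹ ∈ Subgroup.closure S)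
    (h2 : ∀ v ∈ Subgroup.closure S, w⁻¹ * v * w ∈ Subgroup.closure S) :
    ∀ (k : ℤ), ∀ v ∈ Subgroup.closure S, w ^ k * v * (w ^ k)⁻¹ ∈ Subgroup.closure S := by
  intro k
  induction k using Int.induction_on with
  | zero => simpa using fun v hv => hv
  | succ k ih =>
    intro v hv
    have h : w ^ ((k:ℤ)+1) * v * (w ^ ((k:ℤ)+1))⁻¹
        = w * (w ^ (k:ℤ) * v * (w ^ (k:ℤ))⁻¹) * w⁻¹ := by group
    rw [h]; exact h1 _ (ih v hv)
  | pred k ih =>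
    intro v hv
    have h : w ^ (-(k:ℤ)-1) * v * (w ^ (-(k:ℤ)-1))⁻¹
        = w⁻¹ * (w ^ (-(k:ℤ)) * v * (w ^ (-(k:ℤ)))⁻¹) * w := by group
    rw [h]; exact h2 _ (ih v hv)

lemma nf_decomp {S : Set G} {w : G}
    (h1 : ∀ s ∈ S, w * s * w⁻¹ ∈ Subgroup.closure S)
    (h2 : ∀ s ∈ S, w⁻¹ * s * w ∈ Subgroup.closure S) :
    ∀ u ∈ Subgroup.closure (insert w S),
      ∃ v ∈ Subgroup.closure S, ∃ k : ℤ, u = v * w ^ k := by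
  have hc1 := conj_closure h1
  have hc2' : ∀ v ∈ Subgroup.closure S, w⁻¹ * v * w ∈ Subgroup.closure S := by
    intro v hv
    have h2' : ∀ s ∈ S, w⁻¹ * s * (w⁻¹)⁻¹ ∈ Subgroup.closure S := by
      intro s hs; rw [inv_inv]; exact h2 s hs
    have := conj_closure (w := w⁻¹) h2' v hv
    rwa [inv_inv] at this
  have hck := conj_zpow_closure hc1 hc2'
  intro u hu
  induction hu using Subgroup.closure_induction with
  | mem s hs =>
    rcases Set.mem_insert_iff.mp hs with h | h
    · exact ⟨1, one_mem _, 1, by rw [h]; simp⟩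
    · exact ⟨s, Subgroup.subset_closure h, 0, by simp⟩
  | one => exact ⟨1, one_mem _, 0, by simp⟩
  | mul a b ha hb iha ihb =>
    obtain ⟨v, hv, k, rfl⟩ := iha
    obtain ⟨v', hv', j, rfl⟩ := ihb
    exact ⟨v * (w ^ k * v' * (w ^ k)⁻¹), mul_mem hv (hck k v' hv'), k + j, by group⟩
  | inv a ha iha =>
    obtain ⟨v, hv, k, rfl⟩ := iha
    exact ⟨w ^ (-k) * v⁻¹ * (w ^ (-k))⁻¹, hck (-k) _ (inv_mem hv), -k, by group⟩

lemma psi_iter_mem_fser {M : Subgroup G} {x y : G} (hx : x ∈ M) (hy : y ∈ M) (k : ℕ) :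
    (psi y)^[k+1] x ∈ fser M (k+1) := by
  induction k with
  | zero => exact Subgroup.commutator_mem_commutator hx hy
  | succ k ih =>
    rw [Function.iterate_succ_apply']
    exact Subgroup.commutator_mem_commutator ih hy

end NF

section Work

variable [Finite G] {A : Subgroup G} {p : ℕ}

lemma commutator_mem_A (hA : A.Normal) {u : G} (hu : u ∈ A) (v : G) : ⁅u, v⁆ ∈ A := by
  have h : ⁅u, v⁆ = u * (v * u⁻¹ * v⁻¹) := by simp only [commutatorElement_def]; group
  rw [h]
  exact mul_mem hu (conj_mem_A hA (inv_mem hu) v)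

/-- The subgroup `{u ∈ A | ψ_y^[j] u = 1}`. -/
def Tker (hA : A.Normal) (hAab : ∀ x ∈ A, ∀ y ∈ A, x * y = y * x) (y : G) (j : ℕ) :
    Subgroup G where
  carrier := {u | u ∈ A ∧ (psi y)^[j] u = 1}
  one_mem' := ⟨A.one_mem, psi_iter_one y j⟩
  mul_mem' := by
    rintro a b ⟨ha, ha'⟩ ⟨hb, hb'⟩
    exact ⟨mul_mem ha hb, by rw [psi_iter_mul hA hAab y j ha hb, ha', hb', one_mul]⟩
  inv_mem' := by
    rintro a ⟨ha, ha'⟩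
    exact ⟨inv_mem ha, by rw [psi_iter_inv hA hAab y j ha, ha', inv_one]⟩

variable (hA : A.Normal) (hAab : ∀ x ∈ A, ∀ y ∈ A, x * y = y * x)

lemma mem_Tker {y : G} {j : ℕ} {u : G} :
    u ∈ Tker hA hAab y j ↔ u ∈ A ∧ (psi y)^[j] u = 1 := Iff.rfl

lemma Tker_conj_y {y : G} {j : ℕ} {u : G} (hu : u ∈ Tker hA hAab y j) :
    y * u * y⁻¹ ∈ Tker hA hAab y j := by
  refine ⟨conj_mem_A hA hu.1 y, ?_⟩
  rw [psi_iter_conj, hu.2]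
  group

lemma Tker_conj_ypow {y : G} {j : ℕ} (m : ℕ) {u : G} (hu : u ∈ Tker hA hAab y j) :
    y ^ m * u * (y ^ m)⁻¹ ∈ Tker hA hAab y j := by
  induction m with
  | zero => simpa using hu
  | succ m ih =>
    have h : y ^ (m+1) * u * (y ^ (m+1))⁻¹ = y * (y ^ m * u * (y ^ m)⁻¹) * y⁻¹ := by group
    rw [h]
    exact Tker_conj_y hA hAab ih

section WithIndex

variable (hp : p.Prime) (hAp : A.index = p) (hG : IsPGroup p G)

include hp hAp in
lemma orderOf_quot [A.Normal] {w : G} (hw : w ∉ A) : orderOf ((w : G ⧸ A)) = p := by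
  have hcard : Nat.card (G ⧸ A) = p := by rw [← hAp]; rfl
  have h1 : orderOf ((w : G ⧸ A)) ∣ p := hcard ▸ orderOf_dvd_natCard _
  rcases (Nat.dvd_prime hp).mp h1 with h | h
  · exfalso
    have h2 := orderOf_eq_one_iff.mp h
    rw [QuotientGroup.eq_one_iff] at h2
    exact hw h2
  · exact h

include hp hAp hA in
lemma zpow_mem_imp_dvd {w : G} (hw : w ∉ A) {k : ℤ} (hk : w ^ k ∈ A) : (p : ℤ) ∣ k := by
  haveI := hA
  have hord := orderOf_quot hp hAp hw
  have h1 : ((w : G ⧸ A)) ^ k = 1 := by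
    rw [← QuotientGroup.mk_zpow, QuotientGroup.eq_one_iff]
    exact hk
  have := orderOf_dvd_iff_zpow_eq_one.mpr h1
  rwa [hord] at this

include hp hAp hA in
lemma exists_decomp {w : G} (hw : w ∉ A) (z : G) : ∃ m : ℕ, z * (w ^ m)⁻¹ ∈ A := by
  haveI := hA
  have hord := orderOf_quot hp hAp hw
  have htop : Subgroup.zpowers ((w : G ⧸ A)) = ⊤ := by
    apply Subgroup.eq_top_of_card_eq
    rw [Nat.card_zpowers, hord]
    have hcard : Nat.card (G ⧸ A) = p := by rw [← hAp]; rfl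
    rw [hcard]
  have hz : (z : G ⧸ A) ∈ Subgroup.zpowers ((w : G ⧸ A)) := htop ▸ Subgroup.mem_top _
  obtain ⟨k, hk⟩ := Subgroup.mem_zpowers_iff.mp hz
  have hp0 : (0:ℤ) < (p:ℤ) := by exact_mod_cast hp.pos
  set m : ℕ := (k % (p:ℤ)).toNat with hm
  have hm' : (m : ℤ) = k % (p:ℤ) := Int.toNat_of_nonneg (Int.emod_nonneg k hp0.ne')
  have hdm := Int.mul_ediv_add_emod k (p:ℤ)
  have hsub : (p:ℤ) ∣ k - (m:ℤ) := ⟨k / (p:ℤ), by rw [hm']; linarith⟩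
  have h2 : ((w : G ⧸ A)) ^ (k - (m:ℤ)) = 1 :=
    orderOf_dvd_iff_zpow_eq_one.mp (by rw [hord]; exact hsub)
  have h3 : (z : G ⧸ A) = ((w : G ⧸ A)) ^ (m : ℤ) := by
    rw [← hk]
    calc ((w : G ⧸ A)) ^ k = ((w : G ⧸ A)) ^ ((k - (m:ℤ)) + (m:ℤ)) := by ring_nf
      _ = ((w : G ⧸ A)) ^ (k - (m:ℤ)) * ((w : G ⧸ A)) ^ (m:ℤ) := zpow_add _ _ _
      _ = ((w : G ⧸ A)) ^ (m:ℤ) := by rw [h2, one_mul]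
  refine ⟨m, ?_⟩
  rw [← QuotientGroup.eq_one_iff]
  rw [QuotientGroup.mk_mul, QuotientGroup.mk_inv, QuotientGroup.mk_pow]
  rw [show ((z:G) : G ⧸ A) = ((w : G ⧸ A)) ^ (m : ℤ) from h3, zpow_natCast]
  group

include hp hAp hA hAab in
lemma Tker_conj {y : G} (hy : y ∉ A) {j : ℕ} (g : G) {u : G}
    (hu : u ∈ Tker hA hAab y j) : g * u * g⁻¹ ∈ Tker hA hAab y j := by
  obtain ⟨m, ha⟩ := exists_decomp hA hp hAp hy g
  set a' := g * (y ^ m)⁻¹ with ha'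
  have hg : g = a' * y ^ m := by rw [ha']; group
  have h1 : y ^ m * u * (y ^ m)⁻¹ ∈ Tker hA hAab y j := Tker_conj_ypow hA hAab m hu
  have h2 : a' * (y ^ m * u * (y ^ m)⁻¹) * a'⁻¹ = y ^ m * u * (y ^ m)⁻¹ := by
    rw [hAab a' ha _ h1.1]; group
  have h3 : g * u * g⁻¹ = a' * (y ^ m * u * (y ^ m)⁻¹) * a'⁻¹ := by rw [hg]; group
  rw [h3, h2]; exact h1

include hp hAp hA hAab in
lemma key {y : G} (hy : y ∉ A) {j : ℕ} {u : G}
    (hu : u ∈ Tker hA hAab y (j + 1)) (z : G) : ⁅u, z⁆ ∈ Tker hA hAab y j := by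
  have hpow : ∀ m : ℕ, ⁅u, y ^ m⁆ ∈ Tker hA hAab y j := by
    intro m
    induction m with
    | zero => rw [pow_zero, commutatorElement_one_right]; exact one_mem _
    | succ m ih =>
      have hid : ⁅u, y ^ (m+1)⁆ = ⁅u, y⁆ * (y * ⁅u, y ^ m⁆ * y⁻¹) := by
        simp only [commutatorElement_def, pow_succ']
        group
      rw [hid]
      refine mul_mem ?_ (Tker_conj_y hA hAab ih)
      refine ⟨commutator_mem_A hA hu.1 y, ?_⟩
      show (psi y)^[j] (psi y u) = 1
      rw [← Function.iterate_succ_apply]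
      exact hu.2
  obtain ⟨m, ha⟩ := exists_decomp hA hp hAp hy z
  set a' := z * (y ^ m)⁻¹ with ha'
  have hz : z = a' * y ^ m := by rw [ha']; group
  have h1 : u * a' = a' * u := hAab u hu.1 a' ha
  have h2 : a' * ⁅u, y ^ m⁆ = ⁅u, y ^ m⁆ * a' := hAab a' ha _ (commutator_mem_A hA hu.1 _)
  have hcomm : ⁅u, a' * y ^ m⁆ = ⁅u, y ^ m⁆ := by
    calc ⁅u, a' * y ^ m⁆ = (u * a') * (y ^ m * u⁻¹ * (y ^ m)⁻¹ * a'⁻¹) := by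
          simp only [commutatorElement_def]; group
      _ = (a' * u) * (y ^ m * u⁻¹ * (y ^ m)⁻¹ * a'⁻¹) := by rw [h1]
      _ = (a' * ⁅u, y ^ m⁆) * a'⁻¹ := by simp only [commutatorElement_def]; group
      _ = (⁅u, y ^ m⁆ * a') * a'⁻¹ := by rw [h2]
      _ = ⁅u, y ^ m⁆ := by group
  rw [hz, hcomm]
  exact hpow m

include hp hAp hA hAab in
lemma cstar {y : G} (hy : y ∉ A) {H : Subgroup G} {w : G} (hwH : w ∈ H) (hwA : w ∉ A)
    {n : ℕ} (hn : 1 ≤ n) (hker : ∀ u ∈ H, u ∈ A → (psi y)^[n] u = 1) :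
    fser H n = ⊥ := by
  have hdecH : ∀ g ∈ H, ∃ u, (u ∈ H ∧ u ∈ A) ∧ ∃ a : ℕ, g = u * w ^ a := by
    intro g hg
    obtain ⟨a, ha⟩ := exists_decomp hA hp hAp hwA g
    exact ⟨g * (w ^ a)⁻¹, ⟨mul_mem hg (inv_mem (pow_mem hwH a)), ha⟩, a, by group⟩
  have hn' : n - 1 + 1 = n := Nat.succ_pred_eq_of_pos hn
  have hbase : fser H 1 ≤ Tker hA hAab y (n - 1) := by
    rw [fser_succ, fser_zero, Subgroup.commutator_le]
    intro g hg h hh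
    obtain ⟨u, ⟨huH, huA⟩, a, hgeq⟩ := hdecH g hg
    obtain ⟨v, ⟨hvH, hvA⟩, b, hheq⟩ := hdecH h hh
    have huT : u ∈ Tker hA hAab y (n - 1 + 1) := by
      rw [hn']; exact ⟨huA, hker u huH huA⟩
    have hvT : v ∈ Tker hA hAab y (n - 1 + 1) := by
      rw [hn']; exact ⟨hvA, hker v hvH hvA⟩
    have e1 : ⁅u, w ^ b⁆ ∈ Tker hA hAab y (n - 1) := key hA hAab hp hAp hy huT _
    have e2 : ⁅v, (w ^ a)⁻¹⁆ ∈ Tker hA hAab y (n - 1) := key hA hAab hp hAp hy hvT _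
    have e2' : w ^ a * ⁅v, (w ^ a)⁻¹⁆ * (w ^ a)⁻¹ ∈ Tker hA hAab y (n - 1) :=
      Tker_conj hA hAab hp hAp hy _ e2
    have c1 : w ^ a * v * (w ^ a)⁻¹ ∈ A := conj_mem_A hA hvA _
    have c2 : w ^ b * u * (w ^ b)⁻¹ ∈ A := conj_mem_A hA huA _
    have hsw : (w ^ a * v * (w ^ a)⁻¹) * (w ^ b * u * (w ^ b)⁻¹)⁻¹
        = (w ^ b * u * (w ^ b)⁻¹)⁻¹ * (w ^ a * v * (w ^ a)⁻¹) := hAab _ c1 _ (inv_mem c2)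
    have hid : ⁅u * w ^ a, v * w ^ b⁆
        = ⁅u, w ^ b⁆ * (w ^ a * ⁅v, (w ^ a)⁻¹⁆ * (w ^ a)⁻¹) := by
      calc ⁅u * w ^ a, v * w ^ b⁆
          = u * ((w ^ a * v * (w ^ a)⁻¹) * (w ^ b * u * (w ^ b)⁻¹)⁻¹) * v⁻¹ := by
            simp only [commutatorElement_def]; group
        _ = u * ((w ^ b * u * (w ^ b)⁻¹)⁻¹ * (w ^ a * v * (w ^ a)⁻¹)) * v⁻¹ := by rw [hsw]
        _ = ⁅u, w ^ b⁆ * (w ^ a * ⁅v, (w ^ a)⁻¹⁆ * (w ^ a)⁻¹) := by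
            simp only [commutatorElement_def]; group
    rw [hgeq, hheq, hid]
    exact mul_mem e1 e2'
  have hstep : ∀ k, 1 ≤ k → k ≤ n → fser H k ≤ Tker hA hAab y (n - k) := by
    intro k
    induction k with
    | zero => omega
    | succ k ih =>
      intro _ hkn
      rcases Nat.eq_zero_or_pos k with hk0 | hk1
      · subst hk0; exact hbase
      · have hik := ih hk1 (by omega)
        rw [fser_succ, Subgroup.commutator_le]
        intro g hg h hh
        have hgT := hik hg
        have heq : n - k = (n - (k + 1)) + 1 := by omega
        rw [heq] at hgT
        exact key hA hAab hp hAp hy hgT h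
  have hfin := hstep n hn le_rfl
  rw [Nat.sub_self] at hfin
  rw [eq_bot_iff]
  intro u hu
  have := (hfin hu).2
  simpa using this


include hp hAp hA hAab in
lemma step {M L : Subgroup G} {x yM : G} (hLM : L ≤ M) (hne : L ≠ M)
    (hMcl : M = Subgroup.closure {x, yM}) (hxA : x ∈ A) (hyA : yM ∉ A)
    (hMp : ∀ m ∈ M, m ^ p ∈ L) (hMc : ∀ m ∈ M, ∀ m' ∈ M, ⁅m, m'⁆ ∈ L)
    {w : G} (hwL : w ∈ L) (hwA : w ∉ A) {n : ℕ} (hn : 1 ≤ n)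
    (hfM : fser M (n + 1) = ⊥) : fser L n = ⊥ := by
  haveI := hA
  obtain ⟨m, rfl⟩ : ∃ m, n = m + 1 := ⟨n - 1, (Nat.succ_pred_eq_of_pos hn).symm⟩
  have hxM : x ∈ M := hMcl ▸ Subgroup.subset_closure (by simp)
  have hyM : yM ∈ M := hMcl ▸ Subgroup.subset_closure (by simp)
  have hyMpA : yM ^ p ∈ A := hAp ▸ A.pow_index_mem yM
  have hx1 : (psi yM)^[m + 1 + 1] x = 1 := by
    have h := psi_iter_mem_fser hxM hyM (m + 1)
    rw [hfM] at h
    simpa using h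
  have hxpn : ((psi yM)^[m + 1] x) ^ p = 1 := by
    have hz : (psi yM)^[m] x ∈ A := psi_iter_mem hA yM _ hxA
    have h2 : psi yM (psi yM ((psi yM)^[m] x)) = 1 := by
      rw [← Function.iterate_succ_apply' (psi yM) m x,
        ← Function.iterate_succ_apply' (psi yM) (m + 1) x]
      exact hx1
    have h3 := psi_pow_eq_one_of_psi_psi_eq_one hA hAab hyMpA hz h2
    rwa [← Function.iterate_succ_apply' (psi yM) m x] at h3
  -- the set of conjugates of x by powers of yM
  have hSA : ∀ k : ℤ, yM ^ k * x * (yM ^ k)⁻¹ ∈ A := fun k => conj_mem_A hA hxA _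
  set S : Set G := Set.range (fun k : ℤ => yM ^ k * x * (yM ^ k)⁻¹) with hS
  have hNA : Subgroup.closure S ≤ A := by
    apply (Subgroup.closure_le A).mpr
    rintro _ ⟨k, rfl⟩
    exact hSA k
  have h1S : ∀ s ∈ S, yM * s * yM⁻¹ ∈ Subgroup.closure S := by
    rintro _ ⟨k, rfl⟩
    exact Subgroup.subset_closure ⟨k + 1, by group⟩
  have h2S : ∀ s ∈ S, yM⁻¹ * s * yM ∈ Subgroup.closure S := by
    rintro _ ⟨k, rfl⟩
    exact Subgroup.subset_closure ⟨k - 1, by group⟩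
  have hNF : ∀ u ∈ M, ∃ v ∈ Subgroup.closure S, ∃ k : ℤ, u = v * yM ^ k := by
    intro u hu
    apply nf_decomp h1S h2S
    have hle : M ≤ Subgroup.closure (insert yM S) := by
      rw [hMcl]
      apply (Subgroup.closure_le _).mpr
      intro s hs
      rcases hs with h | h
      · subst h
        apply Subgroup.subset_closure
        exact Set.mem_insert_of_mem _ ⟨0, by group⟩
      · simp only [Set.mem_singleton_iff] at h
        subst h
        exact Subgroup.subset_closure (Set.mem_insert _ _)
    exact hle hu
  have hxL : x ∈ L → False := by
    intro hxL'
    have hNL : Subgroup.closure S ≤ L := by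
      apply (Subgroup.closure_le L).mpr
      rintro _ ⟨k, rfl⟩
      show yM ^ k * x * (yM ^ k)⁻¹ ∈ (L : Set G)
      have h : yM ^ k * x * (yM ^ k)⁻¹ = ⁅yM ^ k, x⁆ * x := by
        simp only [commutatorElement_def]; group
      rw [h]
      exact mul_mem (hMc _ (zpow_mem hyM k) _ hxM) hxL'
    obtain ⟨v, hvN, k, hwk⟩ := hNF w (hLM hwL)
    have hykL : yM ^ k ∈ L := by
      have h : yM ^ k = v⁻¹ * w := by rw [hwk]; group
      rw [h]
      exact mul_mem (inv_mem (hNL hvN)) hwL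
    have hpk : ¬ (p : ℤ) ∣ k := by
      rintro ⟨j, hj⟩
      have hyka : yM ^ k ∈ A := by
        rw [hj, zpow_mul, zpow_natCast]
        exact zpow_mem hyMpA j
      exact hwA (by rw [hwk]; exact mul_mem (hNA hvN) hyka)
    have hyL : yM ∈ L := bezout_mem hp (hMp yM hyM) hykL hpk
    apply hne
    refine le_antisymm hLM ?_
    rw [hMcl]
    apply (Subgroup.closure_le L).mpr
    intro s hs
    rcases hs with h | h
    · subst h; exact hxL'
    · simp only [Set.mem_singleton_iff] at h; subst h; exact hyL
  have claimN : ∀ v ∈ Subgroup.closure S,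
      ∃ E : ℤ, ∃ d, (d ∈ A ∧ d ∈ L ∧ (psi yM)^[m + 1] d = 1) ∧ v = x ^ E * d := by
    intro v hv
    induction hv using Subgroup.closure_induction with
    | mem s hs =>
      obtain ⟨k, rfl⟩ := hs
      show ∃ E : ℤ, ∃ d, (d ∈ A ∧ d ∈ L ∧ (psi yM)^[m + 1] d = 1) ∧
        yM ^ k * x * (yM ^ k)⁻¹ = x ^ E * d
      have hdA : x⁻¹ * (yM ^ k * x * (yM ^ k)⁻¹) ∈ A := mul_mem (inv_mem hxA) (hSA k)
      have hcm : x⁻¹ * (yM ^ k * x * (yM ^ k)⁻¹) = ⁅yM ^ k, x⁆ := by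
        rw [hAab _ (inv_mem hxA) _ (hSA k)]
        exact (commutatorElement_def (yM ^ k) x).symm
      refine ⟨1, x⁻¹ * (yM ^ k * x * (yM ^ k)⁻¹), ⟨hdA, ?_, ?_⟩, by group⟩
      · rw [hcm]
        exact hMc _ (zpow_mem hyM k) _ hxM
      · rw [hcm, show ⁅yM ^ k, x⁆ = ⁅x, yM ^ k⁆⁻¹ by rw [commutatorElement_inv]]
        rw [psi_iter_inv hA hAab yM (m + 1) (commutator_mem_A hA hxA _)]
        have hxT : x ∈ Tker hA hAab yM (m + 1 + 1) := ⟨hxA, hx1⟩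
        have := (key hA hAab hp hAp hyA hxT (yM ^ k)).2
        rw [this, inv_one]
    | one => exact ⟨0, 1, ⟨A.one_mem, L.one_mem, psi_iter_one yM (m + 1)⟩, by group⟩
    | mul a b ha hb iha ihb =>
      obtain ⟨E, d, ⟨hdA, hdL, hdk⟩, rfl⟩ := iha
      obtain ⟨E', d', ⟨hdA', hdL', hdk'⟩, rfl⟩ := ihb
      refine ⟨E + E', d * d', ⟨mul_mem hdA hdA', mul_mem hdL hdL', by
        rw [psi_iter_mul hA hAab yM (m + 1) hdA hdA', hdk, hdk', one_mul]⟩, ?_⟩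
      have hcm : d * x ^ E' = x ^ E' * d := hAab _ hdA _ (zpow_mem hxA E')
      calc x ^ E * d * (x ^ E' * d') = x ^ E * (d * x ^ E') * d' := by group
        _ = x ^ E * (x ^ E' * d) * d' := by rw [hcm]
        _ = x ^ (E + E') * (d * d') := by rw [zpow_add]; group
    | inv a ha iha =>
      obtain ⟨E, d, ⟨hdA, hdL, hdk⟩, rfl⟩ := iha
      refine ⟨-E, d⁻¹, ⟨inv_mem hdA, inv_mem hdL, by
        rw [psi_iter_inv hA hAab yM (m + 1) hdA, hdk, inv_one]⟩, ?_⟩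
      have hcm : d⁻¹ * x ^ (-E) = x ^ (-E) * d⁻¹ := hAab _ (inv_mem hdA) _ (zpow_mem hxA _)
      calc (x ^ E * d)⁻¹ = d⁻¹ * x ^ (-E) := by rw [zpow_neg]; group
        _ = x ^ (-E) * d⁻¹ := hcm
  have hker : ∀ u ∈ L, u ∈ A → (psi yM)^[m + 1] u = 1 := by
    intro u huL huA
    obtain ⟨v, hvN, k, huk⟩ := hNF u (hLM huL)
    obtain ⟨E, d, ⟨hdA, hdL, hdk⟩, hvE⟩ := claimN v hvN
    have hykA : yM ^ k ∈ A := by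
      have h : yM ^ k = v⁻¹ * u := by rw [huk]; group
      rw [h]
      exact mul_mem (inv_mem (hNA hvN)) huA
    obtain ⟨j, hj⟩ := zpow_mem_imp_dvd hA hp hAp hyA hykA
    by_cases hpE : (p : ℤ) ∣ E
    · obtain ⟨e, he⟩ := hpE
      have hu' : u = x ^ E * d * yM ^ k := by rw [huk, hvE]
      have hx' : (psi yM)^[m + 1] (x ^ E) = 1 := by
        rw [psi_iter_zpow hA hAab yM (m + 1) hxA, he, zpow_mul, zpow_natCast, hxpn, one_zpow]
      have hyk' : (psi yM)^[m + 1] (yM ^ k) = 1 := by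
        have hyp1 : psi yM (yM ^ p) = 1 := by
          show ⁅yM ^ p, yM⁆ = 1
          rw [commutatorElement_eq_one_iff_mul_comm]
          exact ((Commute.refl yM).pow_left p).eq
        have hk' : yM ^ k = (yM ^ p) ^ j := by rw [hj, zpow_mul, zpow_natCast]
        have hn1 : (psi yM)^[m + 1] (yM ^ p) = 1 := by
          rw [Function.iterate_succ_apply, hyp1, psi_iter_one]
        rw [hk', psi_iter_zpow hA hAab yM (m + 1) hyMpA, hn1, one_zpow]
      rw [hu', psi_iter_mul hA hAab yM (m + 1) (mul_mem (zpow_mem hxA E) hdA) hykA,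
          psi_iter_mul hA hAab yM (m + 1) (zpow_mem hxA E) hdA, hx', hdk, hyk']
      simp
    · exfalso
      have hykL : yM ^ k ∈ L := by
        rw [hj, zpow_mul, zpow_natCast]
        exact zpow_mem (hMp yM hyM) j
      have hxEL : x ^ E ∈ L := by
        have h : x ^ E = u * (yM ^ k)⁻¹ * d⁻¹ := by rw [huk, hvE]; group
        rw [h]
        exact mul_mem (mul_mem huL (inv_mem hykL)) (inv_mem hdL)
      exact hxL (bezout_mem hp (hMp x hxM) hxEL hpE)
  obtain ⟨w', hw'L, hw'A⟩ : ∃ w', w' ∈ L ∧ w' ∉ A := ⟨w, hwL, hwA⟩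
  exact cstar hA hAab hp hAp hyA hw'L hw'A hn hker


include hp hAp hA hAab in
lemma gen2 {M : Subgroup G} {a b : G} (hM : M = Subgroup.closure {a, b})
    (hMnab : ∃ u ∈ M, ∃ v ∈ M, u * v ≠ v * u) :
    ∃ x yM : G, M = Subgroup.closure {x, yM} ∧ x ∈ A ∧ yM ∉ A := by
  haveI := hA
  have hnotboth : ¬ (a ∈ A ∧ b ∈ A) := by
    rintro ⟨ha, hb⟩
    have hMA : M ≤ A := by
      rw [hM]
      apply (Subgroup.closure_le A).mpr
      intro s hs
      rcases hs with h | h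
      · subst h; exact ha
      · simp only [Set.mem_singleton_iff] at h; subst h; exact hb
    obtain ⟨u, hu, v, hv, huv⟩ := hMnab
    exact huv (hAab u (hMA hu) v (hMA hv))
  by_cases hbA : b ∈ A
  · have haA : a ∉ A := fun h => hnotboth ⟨h, hbA⟩
    exact ⟨b, a, by rw [hM, Set.pair_comm], hbA, haA⟩
  · by_cases haA : a ∈ A
    · exact ⟨a, b, hM, haA, hbA⟩
    · obtain ⟨m, hmA⟩ := exists_decomp hA hp hAp hbA a
      refine ⟨a * (b ^ m)⁻¹, b, ?_, hmA, hbA⟩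
      rw [hM]
      apply le_antisymm
      · apply (Subgroup.closure_le _).mpr
        intro s hs
        rcases hs with h | h
        · rw [h]
          have hae : a = (a * (b ^ m)⁻¹) * b ^ m := by group
          rw [hae]
          exact mul_mem (Subgroup.subset_closure (by simp))
            (pow_mem (Subgroup.subset_closure (by simp)) m)
        · simp only [Set.mem_singleton_iff] at h; subst h
          exact Subgroup.subset_closure (by simp)
      · apply (Subgroup.closure_le _).mpr
        intro s hs
        rcases hs with h | h
        · subst h
          exact mul_mem (Subgroup.subset_closure (by simp))
            (inv_mem (pow_mem (Subgroup.subset_closure (by simp)) m))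
        · simp only [Set.mem_singleton_iff] at h; subst h
          exact Subgroup.subset_closure (by simp)

include hp hG hA hAp hAab in
lemma claim2 (h2gen : ∀ H : Subgroup G, ¬ (∀ x ∈ H, ∀ y ∈ H, x * y = y * x) →
      ∃ a b : G, H = Subgroup.closure {a, b}) :
    ∀ s : ℕ, ∀ H : Subgroup G, (¬ ∀ x ∈ H, ∀ y ∈ H, x * y = y * x) → H.index = p ^ s →
      ∀ n : ℕ, 1 ≤ n → fser H n ≠ ⊥ → fser (⊤ : Subgroup G) (n + s) ≠ ⊥ := by
  intro s
  induction s with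
  | zero =>
    intro H hnab hidx n hn hf
    have hH : H = ⊤ := Subgroup.index_eq_one.mp (by simpa using hidx)
    rw [Nat.add_zero, ← hH]
    exact hf
  | succ s ih =>
    intro H hnab hidx n hn hf
    obtain ⟨M, hHM, hMidx⟩ := exists_above_index_pow hp hG s
      (by rw [hidx]; exact pow_dvd_pow p (Nat.le_succ s))
    have hne : H ≠ M := by
      rintro rfl
      rw [hidx] at hMidx
      have := Nat.pow_right_injective hp.two_le hMidx
      omega
    have hMnab : ¬ ∀ x ∈ M, ∀ y ∈ M, x * y = y * x := by
      intro hall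
      exact hnab (fun u hu v hv => hall u (hHM hu) v (hHM hv))
    obtain ⟨a, b, hMcl⟩ := h2gen M hMnab
    obtain ⟨x, yM, hMcl', hxA, hyA⟩ := gen2 hA hAab hp hAp hMcl (nonab_pair hMnab)
    have hrel : (H.subgroupOf M).index = p := by
      have h1 := Subgroup.relIndex_mul_index hHM
      rw [hMidx, hidx, pow_succ, Nat.mul_comm (p ^ s) p] at h1
      exact Nat.eq_of_mul_eq_mul_right (pow_pos hp.pos s) h1
    have hpM : IsPGroup p ↥M := hG.to_subgroup M
    have hMp : ∀ z ∈ M, z ^ p ∈ H := by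
      intro z hz
      have h := pow_p_mem_of_index_p hp hpM hrel ⟨z, hz⟩
      rw [Subgroup.mem_subgroupOf] at h
      simpa using h
    have hMc : ∀ z ∈ M, ∀ z' ∈ M, ⁅z, z'⁆ ∈ H := by
      intro z hz z' hz'
      have h := commutator_mem_of_index_p hp hpM hrel ⟨z, hz⟩ ⟨z', hz'⟩
      rw [Subgroup.mem_subgroupOf] at h
      simpa [commutatorElement_def] using h
    obtain ⟨w, hwH, hwA⟩ : ∃ w ∈ H, w ∉ A := by
      by_contra hcon; push_neg at hcon
      exact hnab (fun u hu v hv => hAab u (hcon u hu) v (hcon v hv))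
    have hfM : fser M (n + 1) ≠ ⊥ := by
      intro hbot
      exact hf (step hA hAab hp hAp hHM hne hMcl' hxA hyA hMp hMc hwH hwA hn hbot)
    have hfin := ih M hMnab hMidx (n + 1) (by omega) hfM
    rwa [show n + 1 + s = n + (s + 1) by omega] at hfin


include hp hG hA hAp hAab in
lemma exist {y : G} (hy : y ∉ A) {c : ℕ} (hc1 : 1 ≤ c)
    (hcne : fser (⊤ : Subgroup G) c ≠ ⊥) (hcbot : fser (⊤ : Subgroup G) (c + 1) = ⊥) :
    ∃ K : Subgroup G, (∃ u ∈ K, ∃ v ∈ K, u * v ≠ v * u) ∧ p ^ (c - 1) ∣ K.index := by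
  haveI := hA
  obtain ⟨a, haA, hac⟩ : ∃ a, a ∈ A ∧ (psi y)^[c] a ≠ 1 := by
    by_contra hcon; push_neg at hcon
    exact hcne (cstar hA hAab hp hAp hy (Subgroup.mem_top y) hy hc1
      (fun u _ huA => hcon u huA))
  have htailall : ∀ u : G, (psi y)^[c + 1] u = 1 := by
    intro u
    have h := psi_iter_mem_fser (Subgroup.mem_top u) (Subgroup.mem_top y) c
    rw [hcbot] at h; simpa using h
  obtain ⟨r, hr⟩ : ∃ r, orderOf ((psi y)^[c] a) = p ^ r := by
    obtain ⟨k, hk⟩ := hG ((psi y)^[c] a)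
    obtain ⟨r, _, hro⟩ := (Nat.dvd_prime_pow hp).mp (orderOf_dvd_of_pow_eq_one hk)
    exact ⟨r, hro⟩
  have hr1 : 1 ≤ r := by
    rcases Nat.eq_zero_or_pos r with h0 | h1
    · exfalso; rw [h0, pow_zero, orderOf_eq_one_iff] at hr; exact hac hr
    · exact h1
  set a₁ := a ^ (p ^ (r - 1)) with ha₁
  have ha₁A : a₁ ∈ A := pow_mem haA _
  set g := (psi y)^[c] a₁ with hgdef
  have hgval : g = ((psi y)^[c] a) ^ (p ^ (r - 1)) := by
    rw [hgdef, ha₁, psi_iter_pow hA hAab y c haA]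
  have hgne : g ≠ 1 := by
    rw [hgval]
    intro h
    have h1 := orderOf_dvd_of_pow_eq_one h
    rw [hr] at h1
    have h2 := Nat.le_of_dvd (pow_pos hp.pos _) h1
    have h3 := Nat.pow_lt_pow_right hp.one_lt (show r - 1 < r by omega)
    omega
  have hgp : g ^ p = 1 := by
    rw [hgval, ← pow_mul, ← pow_succ, show r - 1 + 1 = r by omega, ← hr, pow_orderOf_eq_one]
  have hgA : g ∈ A := psi_iter_mem hA y c ha₁A
  have hgpsi : psi y g = 1 := by
    rw [hgdef, ← Function.iterate_succ_apply' (psi y) c]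
    exact htailall a₁
  set x := (psi y)^[c - 1] a₁ with hxdef
  have hxA : x ∈ A := psi_iter_mem hA y _ ha₁A
  have hpsix : psi y x = g := by
    rw [hxdef, hgdef]
    have h := Function.iterate_succ_apply' (psi y) (c - 1) a₁
    rw [show Nat.succ (c - 1) = c from by omega] at h
    exact h.symm
  have hxppsi : psi y (x ^ p) = 1 := by
    have h := psi_iter_pow hA hAab y 1 hxA p
    simp only [Function.iterate_one] at h
    rw [h, hpsix, hgp]
  set K := Subgroup.closure ({x, y} : Set G) with hK
  have hxK : x ∈ K := Subgroup.subset_closure (by simp)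
  have hyK : y ∈ K := Subgroup.subset_closure (by simp)
  have hnc : x * y ≠ y * x := by
    intro h
    have h1 : psi y x = 1 := commutatorElement_eq_one_iff_mul_comm.mpr h
    rw [hpsix] at h1; exact hgne h1
  set Zc := Tker hA hAab y 1 with hZc
  have hyp_mem : y ^ p ∈ Zc := by
    refine ⟨hAp ▸ A.pow_index_mem y, ?_⟩
    show (psi y)^[1] (y ^ p) = 1
    rw [Function.iterate_one]
    show ⁅y ^ p, y⁆ = 1
    rw [commutatorElement_eq_one_iff_mul_comm]
    exact ((Commute.refl y).pow_left p).eq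
  have hgZc : g ∈ Zc := ⟨hgA, by simpa [Function.iterate_one] using hgpsi⟩
  have hxpZc : x ^ p ∈ Zc := ⟨pow_mem hxA p, by simpa [Function.iterate_one] using hxppsi⟩
  set W := Subgroup.closure (insert x (Zc : Set G)) with hW
  have hxW : x ∈ W := Subgroup.subset_closure (Set.mem_insert _ _)
  have hZcW : Zc ≤ W := fun z hz => Subgroup.subset_closure (Set.mem_insert_of_mem _ hz)
  have hZcA : Zc ≤ A := fun z hz => hz.1
  -- normal form for K
  have hsx : y * x * y⁻¹ = g⁻¹ * x := by
    rw [conj_eq_psi_inv_mul y x, hpsix]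
  have hsg : y * g * y⁻¹ = g := by
    rw [conj_eq_psi_inv_mul y g, hgpsi]; group
  have hsx' : y⁻¹ * x * y = g * x := by
    have h2 : y * (g * x) * y⁻¹ = x := by
      calc y * (g * x) * y⁻¹ = (y * g * y⁻¹) * (y * x * y⁻¹) := by group
        _ = g * (g⁻¹ * x) := by rw [hsg, hsx]
        _ = x := by group
    calc y⁻¹ * x * y = y⁻¹ * (y * (g * x) * y⁻¹) * y := by rw [h2]
      _ = g * x := by group
  have hsg' : y⁻¹ * g * y = g := by
    calc y⁻¹ * g * y = y⁻¹ * (y * g * y⁻¹) * y := by rw [hsg]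
      _ = g := by group
  have hxcl : x ∈ Subgroup.closure ({x, g} : Set G) := Subgroup.subset_closure (by simp)
  have hgcl : g ∈ Subgroup.closure ({x, g} : Set G) := Subgroup.subset_closure (by simp)
  have h1S : ∀ s ∈ ({x, g} : Set G), y * s * y⁻¹ ∈ Subgroup.closure ({x, g} : Set G) := by
    intro s hs
    rcases hs with h | h
    · rw [h, hsx]; exact mul_mem (inv_mem hgcl) hxcl
    · simp only [Set.mem_singleton_iff] at h; rw [h, hsg]; exact hgcl
  have h2S : ∀ s ∈ ({x, g} : Set G), y⁻¹ * s * y ∈ Subgroup.closure ({x, g} : Set G) := by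
    intro s hs
    rcases hs with h | h
    · rw [h, hsx']; exact mul_mem hgcl hxcl
    · simp only [Set.mem_singleton_iff] at h; rw [h, hsg']; exact hgcl
  have hNF := nf_decomp h1S h2S
  have hKle : K ≤ Subgroup.closure (insert y ({x, g} : Set G)) := by
    rw [hK]
    apply (Subgroup.closure_le _).mpr
    intro s hs
    rcases hs with h | h
    · rw [h]; exact Subgroup.subset_closure (by simp)
    · simp only [Set.mem_singleton_iff] at h; rw [h]
      exact Subgroup.subset_closure (Set.mem_insert _ _)
  have hxgW : Subgroup.closure ({x, g} : Set G) ≤ W := by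
    apply (Subgroup.closure_le _).mpr
    intro s hs
    rcases hs with h | h
    · rw [h]; exact hxW
    · simp only [Set.mem_singleton_iff] at h; rw [h]; exact hZcW hgZc
  have hxgA : Subgroup.closure ({x, g} : Set G) ≤ A := by
    apply (Subgroup.closure_le _).mpr
    intro s hs
    rcases hs with h | h
    · rw [h]; exact hxA
    · simp only [Set.mem_singleton_iff] at h; rw [h]; exact hgA
  have hKAW : ∀ u ∈ K, u ∈ A → u ∈ W := by
    intro u huK huA
    obtain ⟨v, hv, k, huv⟩ := hNF u (hKle huK)
    have hykA : y ^ k ∈ A := by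
      have h : y ^ k = v⁻¹ * u := by rw [huv]; group
      rw [h]; exact mul_mem (inv_mem (hxgA hv)) huA
    obtain ⟨j, hj⟩ := zpow_mem_imp_dvd hA hp hAp hy hykA
    have hykW : y ^ k ∈ W := by
      rw [hj, zpow_mul, zpow_natCast]
      exact zpow_mem (hZcW hyp_mem) j
    rw [huv]; exact mul_mem (hxgW hv) hykW
  -- representation of W, giving the cardinality bound
  have hWrep : ∀ u ∈ W, ∃ i : ℕ, i < p ∧ ∃ z ∈ Zc, u = x ^ i * z := by
    intro u hu
    induction hu using Subgroup.closure_induction with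
    | mem s hs =>
      rcases hs with h | h
      · exact ⟨1, hp.one_lt, 1, one_mem _, by rw [h]; simp⟩
      · exact ⟨0, hp.pos, s, h, by simp⟩
    | one => exact ⟨0, hp.pos, 1, one_mem _, by simp⟩
    | mul a' b' ha' hb' iha ihb =>
      obtain ⟨i, hi, z, hz, rfl⟩ := iha
      obtain ⟨i', hi', z', hz', rfl⟩ := ihb
      have hcm : z * x ^ i' = x ^ i' * z := hAab _ (hZcA hz) _ (pow_mem hxA i')
      have hE : x ^ i * z * (x ^ i' * z') = x ^ (i + i') * (z * z') := by
        calc x ^ i * z * (x ^ i' * z') = x ^ i * (z * x ^ i') * z' := by group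
          _ = x ^ i * (x ^ i' * z) * z' := by rw [hcm]
          _ = x ^ (i + i') * (z * z') := by rw [pow_add]; group
      refine ⟨(i + i') % p, Nat.mod_lt _ hp.pos, (x ^ p) ^ ((i + i') / p) * (z * z'),
        mul_mem (pow_mem hxpZc _) (mul_mem hz hz'), ?_⟩
      rw [hE]
      have hxsplit : x ^ (i + i') = x ^ ((i + i') % p) * (x ^ p) ^ ((i + i') / p) := by
        rw [← pow_mul, ← pow_add]
        congr 1
        exact (Nat.mod_add_div (i + i') p).symm
      rw [hxsplit]; group
    | inv a' ha' iha =>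
      obtain ⟨i, hi, z, hz, rfl⟩ := iha
      rcases Nat.eq_zero_or_pos i with h0 | hpos
      · subst h0
        exact ⟨0, hp.pos, z⁻¹, inv_mem hz, by simp⟩
      · have hcm : (x ^ i)⁻¹ * z⁻¹ = z⁻¹ * (x ^ i)⁻¹ :=
          hAab _ (inv_mem (pow_mem hxA i)) _ (inv_mem (hZcA hz))
        have hpi : x ^ (p - i) * (x ^ p)⁻¹ = (x ^ i)⁻¹ := by
          have hh : x ^ (p - i) * x ^ i = x ^ p := by
            rw [← pow_add]; congr 1; omega
          rw [← hh]; group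
        refine ⟨p - i, by omega, (x ^ p)⁻¹ * z⁻¹, mul_mem (inv_mem hxpZc) (inv_mem hz), ?_⟩
        calc (x ^ i * z)⁻¹ = z⁻¹ * (x ^ i)⁻¹ := by group
          _ = (x ^ i)⁻¹ * z⁻¹ := hcm.symm
          _ = (x ^ (p - i) * (x ^ p)⁻¹) * z⁻¹ := by rw [hpi]
          _ = x ^ (p - i) * ((x ^ p)⁻¹ * z⁻¹) := by group
  have hWcard : Nat.card ↥W ≤ p * Nat.card ↥Zc := by
    have hsurj : Function.Surjective
        (fun iz : Fin p × ↥Zc => (⟨x ^ (iz.1 : ℕ) * iz.2, mul_mem (pow_mem hxW _)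
          (hZcW iz.2.2)⟩ : ↥W)) := by
      rintro ⟨u, hu⟩
      obtain ⟨i, hi, z, hz, hrep⟩ := hWrep u hu
      exact ⟨(⟨i, hi⟩, ⟨z, hz⟩), by simp [hrep]⟩
    calc Nat.card ↥W ≤ Nat.card (Fin p × ↥Zc) := Nat.card_le_card_of_surjective _ hsurj
      _ = p * Nat.card ↥Zc := by simp [Nat.card_prod]
  -- strictly increasing chain of kernels
  have hstepT : ∀ j, Tker hA hAab y j ≤ Tker hA hAab y (j + 1) := by
    intro j u hu
    exact ⟨hu.1, by rw [Function.iterate_succ_apply', hu.2, psi_one]⟩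
  have hTA : Tker hA hAab y (c + 1) = A := by
    apply le_antisymm (fun u hu => hu.1)
    intro u hu
    exact ⟨hu, htailall u⟩
  have hprop : ∀ j i, Tker hA hAab y j = Tker hA hAab y (j + 1) →
      Tker hA hAab y (j + i) = Tker hA hAab y (j + i + 1) := by
    intro j i hj
    apply le_antisymm (hstepT _)
    intro u hu
    have h1 : (psi y)^[i] u ∈ Tker hA hAab y (j + 1) := by
      refine ⟨psi_iter_mem hA y i hu.1, ?_⟩
      rw [← Function.iterate_add_apply]
      have he : j + 1 + i = j + i + 1 := by omega
      rw [he]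
      exact hu.2
    rw [← hj] at h1
    refine ⟨hu.1, ?_⟩
    have h2 := h1.2
    rw [← Function.iterate_add_apply] at h2
    exact h2
  have hstrict : ∀ j, 1 ≤ j → j ≤ c →
      Tker hA hAab y j ≠ Tker hA hAab y (j + 1) := by
    intro j _ hjc heq
    have hchain : ∀ i, Tker hA hAab y j = Tker hA hAab y (j + i) := by
      intro i
      induction i with
      | zero => rfl
      | succ i ih => exact ih.trans (hprop j i heq)
    have hfin := hchain (c + 1 - j)
    rw [show j + (c + 1 - j) = c + 1 by omega, hTA] at hfin
    have hja : (psi y)^[j] a = 1 := (show a ∈ Tker hA hAab y j by rw [hfin]; exact haA).2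
    apply hac
    have h : (psi y)^[c] a = (psi y)^[c - j] ((psi y)^[j] a) := by
      rw [← Function.iterate_add_apply, show c - j + j = c by omega]
    rw [h, hja, psi_iter_one]
  have hchaincard : ∀ j, j ≤ c →
      p ^ j * Nat.card ↥Zc ≤ Nat.card ↥(Tker hA hAab y (j + 1)) := by
    intro j
    induction j with
    | zero => intro _; simpa [hZc] using le_refl (Nat.card ↥Zc)
    | succ j ih =>
      intro hjc
      have h1 := ih (by omega)
      have h2 := card_step_of_ne hp hG (hstepT (j + 1))
        (hstrict (j + 1) (by omega) (by omega))
      calc p ^ (j + 1) * Nat.card ↥Zc = p * (p ^ j * Nat.card ↥Zc) := by ring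
        _ ≤ p * Nat.card ↥(Tker hA hAab y (j + 1)) := Nat.mul_le_mul_left p h1
        _ ≤ Nat.card ↥(Tker hA hAab y (j + 1 + 1)) := h2
  have hAcard : p ^ c * Nat.card ↥Zc ≤ Nat.card ↥A := by
    have h := hchaincard c le_rfl
    rwa [hTA] at h
  -- cardinality of K
  have hAKW : A ⊓ K ≤ W := fun u hu => hKAW u hu.2 hu.1
  have hKcard : Nat.card ↥K ≤ p * Nat.card ↥(A ⊓ K) := by
    have h1 : ((A ⊓ K).subgroupOf K).index ∣ p := by
      have h2 : (A ⊓ K).relIndex K ∣ A.index := by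
        rw [Subgroup.inf_relIndex_right]
        exact Subgroup.relIndex_dvd_index_of_normal A K
      rw [hAp] at h2
      exact h2
    have h3 := Subgroup.card_mul_index ((A ⊓ K).subgroupOf K)
    have h4 : Nat.card ↥((A ⊓ K).subgroupOf K) = Nat.card ↥(A ⊓ K) :=
      Nat.card_congr (Subgroup.subgroupOfEquivOfLe inf_le_right).toEquiv
    have h5 : ((A ⊓ K).subgroupOf K).index ≤ p := Nat.le_of_dvd hp.pos h1
    calc Nat.card ↥K = Nat.card ↥((A ⊓ K).subgroupOf K) * ((A ⊓ K).subgroupOf K).index :=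
          h3.symm
      _ ≤ Nat.card ↥(A ⊓ K) * p := by
          rw [h4]; exact Nat.mul_le_mul_left _ h5
      _ = p * Nat.card ↥(A ⊓ K) := Nat.mul_comm _ _
  have hWle : Nat.card ↥(A ⊓ K) ≤ Nat.card ↥W := Subgroup.card_le_of_le hAKW
  have hGA : Nat.card ↥A * p = Nat.card G := by
    rw [← hAp]; exact Subgroup.card_mul_index A
  have hKidx := Subgroup.card_mul_index K
  have hZpos : 0 < Nat.card ↥Zc := Nat.card_pos
  have hKpos : 0 < Nat.card ↥K := Nat.card_pos
  -- final inequality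
  have hfinal : p ^ (c - 1) ≤ K.index := by
    have hb1 : Nat.card ↥K ≤ p ^ 2 * Nat.card ↥Zc := by
      calc Nat.card ↥K ≤ p * Nat.card ↥(A ⊓ K) := hKcard
        _ ≤ p * Nat.card ↥W := Nat.mul_le_mul_left p hWle
        _ ≤ p * (p * Nat.card ↥Zc) := Nat.mul_le_mul_left p hWcard
        _ = p ^ 2 * Nat.card ↥Zc := by ring
    have hb2 : p ^ (c + 1) * Nat.card ↥Zc ≤ Nat.card G := by
      calc p ^ (c + 1) * Nat.card ↥Zc = (p ^ c * Nat.card ↥Zc) * p := by ring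
        _ ≤ Nat.card ↥A * p := Nat.mul_le_mul_right p hAcard
        _ = Nat.card G := hGA
    have hb3 : p ^ (c + 1) * Nat.card ↥Zc ≤ (p ^ 2 * Nat.card ↥Zc) * K.index := by
      calc p ^ (c + 1) * Nat.card ↥Zc ≤ Nat.card G := hb2
        _ = Nat.card ↥K * K.index := hKidx.symm
        _ ≤ (p ^ 2 * Nat.card ↥Zc) * K.index := Nat.mul_le_mul_right _ hb1
    have hb4 : p ^ (c + 1) ≤ p ^ 2 * K.index := by
      have h := hb3
      rw [show (p ^ 2 * Nat.card ↥Zc) * K.index = (p ^ 2 * K.index) * Nat.card ↥Zc by ring,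
        show p ^ (c + 1) * Nat.card ↥Zc = p ^ (c + 1) * Nat.card ↥Zc by rfl] at h
      exact Nat.le_of_mul_le_mul_right h hZpos
    have hsplit : p ^ (c + 1) = p ^ 2 * p ^ (c - 1) := by
      rw [← pow_add]
      congr 1
      omega
    rw [hsplit] at hb4
    exact Nat.le_of_mul_le_mul_left hb4 (pow_pos hp.pos 2)
  haveI : Fact p.Prime := ⟨hp⟩
  haveI : K.FiniteIndex := ⟨Subgroup.index_ne_zero_of_finite⟩
  obtain ⟨e, he⟩ := hG.index K
  have hce : c - 1 ≤ e := by
    rw [he] at hfinal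
    exact (Nat.pow_le_pow_iff_right hp.one_lt).mp hfinal
  exact ⟨K, ⟨x, hxK, y, hyK, hnc⟩, by rw [he]; exact pow_dvd_pow p hce⟩

end WithIndex

end Work



end AtProof

/-- Let `G` be a finite non-abelian `p`-group having an abelian subgroup of
index `p`, in which every non-abelian subgroup is generated by two elements. Then `G` is
an `A_t`-group if and only if the nilpotency class of `G` equals `t + 1`. -/
theorem isAtGroup_iff_class_eq (p : ℕ) (hp : p.Prime) (t : ℕ) (ht : 1 ≤ t)
    (G : Type*) [Group G] [Finite G] (hG : IsPGroup p G)
    (hnonab : ¬ ∀ x y : G, x * y = y * x)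
    (hab : ∃ A : Subgroup G, A.index = p ∧ ∀ x ∈ A, ∀ y ∈ A, x * y = y * x)
    (h2gen : ∀ H : Subgroup G, ¬ (∀ x ∈ H, ∀ y ∈ H, x * y = y * x) →
      ∃ a b : G, H = Subgroup.closure {a, b}) :
    IsAtGroup p t G ↔
      ((⊤ : Subgroup G).lowerCentralSeries (t + 1) = ⊥ ∧ (⊤ : Subgroup G).lowerCentralSeries t ≠ ⊥) := by
  classical
  obtain ⟨A, hAp, hAab⟩ := hab
  have hAn : A.Normal := AtProof.normal_of_index_p hp hG hAp
  obtain ⟨y, hy⟩ : ∃ y, y ∉ A := by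
    by_contra hall; push_neg at hall
    have htop : A = ⊤ := (Subgroup.eq_top_iff' A).mpr hall
    rw [htop, Subgroup.index_top] at hAp
    exact hp.one_lt.ne hAp
  have hfl : ∀ n, AtProof.fser (⊤ : Subgroup G) n = (⊤ : Subgroup G).lowerCentralSeries n := AtProof.fser_top
  haveI : Fact p.Prime := ⟨hp⟩
  obtain ⟨nn, hnn⟩ := nilpotent_iff_lowerCentralSeries.mp hG.isNilpotent
  have hclaim := AtProof.claim2 hAn hAab hp hAp hG h2gen
  constructor
  · rintro ⟨h1, H, hHidx, hHnab⟩
    constructor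
    · by_contra hne
      have hex : ∃ n, (⊤ : Subgroup G).lowerCentralSeries n = ⊥ := ⟨nn, hnn⟩
      have hebot : (⊤ : Subgroup G).lowerCentralSeries (Nat.find hex) = ⊥ := Nat.find_spec hex
      have hmin : ∀ m < Nat.find hex, (⊤ : Subgroup G).lowerCentralSeries m ≠ ⊥ :=
        fun m hm => Nat.find_min hex hm
      set e := Nat.find hex with he
      have hlt : t + 1 < e := by
        by_contra hle
        push_neg at hle
        apply hne
        have h2 : (⊤ : Subgroup G).lowerCentralSeries (t + 1) ≤ (⊤ : Subgroup G).lowerCentralSeries e :=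
          Subgroup.lowerCentralSeries_antitone _ hle
        rw [hebot] at h2
        exact le_bot_iff.mp h2
      have hc1 : 1 ≤ e - 1 := by omega
      have hcne : AtProof.fser (⊤ : Subgroup G) (e - 1) ≠ ⊥ := by
        rw [hfl]; exact hmin (e - 1) (by omega)
      have hcbot : AtProof.fser (⊤ : Subgroup G) (e - 1 + 1) = ⊥ := by
        rw [hfl, show e - 1 + 1 = e by omega]; exact hebot
      obtain ⟨K, hKnab, hKdvd⟩ := AtProof.exist hAn hAab hp hAp hG hy hc1 hcne hcbot
      have hdvd' : p ^ t ∣ K.index :=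
        dvd_trans (pow_dvd_pow p (by omega : t ≤ e - 1 - 1)) hKdvd
      obtain ⟨L, hKL, hLidx⟩ := AtProof.exists_above_index_pow hp hG t hdvd'
      obtain ⟨u, hu, v, hv, huv⟩ := hKnab
      exact huv (h1 L hLidx u (hKL hu) v (hKL hv))
    · rw [← hfl]
      have hfH1 : AtProof.fser H 1 ≠ ⊥ := AtProof.fser_one_ne_bot hHnab
      have h := hclaim (t - 1) H hHnab hHidx 1 le_rfl hfH1
      rwa [show 1 + (t - 1) = t by omega] at h
  · rintro ⟨hb1, hb2⟩
    constructor
    · intro H hHidx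
      by_contra hHnab
      have hfH1 : AtProof.fser H 1 ≠ ⊥ := AtProof.fser_one_ne_bot hHnab
      have h := hclaim t H hHnab hHidx 1 le_rfl hfH1
      rw [show 1 + t = t + 1 by omega, hfl] at h
      exact h hb1
    · have hcne : AtProof.fser (⊤ : Subgroup G) t ≠ ⊥ := by rw [hfl]; exact hb2
      have hcbot : AtProof.fser (⊤ : Subgroup G) (t + 1) = ⊥ := by rw [hfl]; exact hb1
      obtain ⟨K, hKnab, hKdvd⟩ := AtProof.exist hAn hAab hp hAp hG hy ht hcne hcbot
      obtain ⟨L, hKL, hLidx⟩ := AtProof.exists_above_index_pow hp hG (t - 1) hKdvd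
      refine ⟨L, hLidx, ?_⟩
      intro hall
      obtain ⟨u, hu, v, hv, huv⟩ := hKnab
      exact huv (hall u (hKL hu) v (hKL hv))
end

section
/- Let p be a prime and G a finite p-group that is an A_2-group. Then d(G) ≤ 3 and the nilpotency class of G is at most 3. -/
set_option linter.unusedSectionVars false

open Subgroup
open scoped commutatorElement

section helpers
variable {p : ℕ} {G : Type*} [Group G] [Finite G]

lemma myA2_eq_of_le_of_index_eq {M N : Subgroup G} (h : M ≤ N) (hi : M.index = N.index)
    (hne : M.index ≠ 0) : M = N := by
  have hm := Subgroup.relIndex_mul_index h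
  rw [hi] at hm
  have hN : N.index ≠ 0 := by rwa [← hi]
  have h1 : M.relIndex N = 1 := by
    rcases Nat.eq_zero_or_pos (M.relIndex N) with h0 | h0
    · simp [h0] at hm; omega
    · have := Nat.eq_of_mul_eq_mul_right (Nat.pos_of_ne_zero hN) (by linarith [hm] : M.relIndex N * N.index = 1 * N.index)
      exact this
  exact le_antisymm h (Subgroup.relIndex_eq_one.mp h1)

/-- In a finite p-group, any subgroup of prime index is normal. -/
lemma myA2_normal_of_index_prime (hp : p.Prime) (hG : IsPGroup p G) {M : Subgroup G}
    (hM : M.index = p) : M.Normal := by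
  haveI : Fact p.Prime := ⟨hp⟩
  have hnil : Group.IsNilpotent G := hG.isNilpotent
  have hnc : NormalizerCondition G := normalizerCondition_of_isNilpotent
  rw [← Subgroup.normalizer_eq_top_iff]
  have hMne : M ≠ ⊤ := by
    intro h; rw [h, Subgroup.index_top] at hM; exact hp.one_lt.ne' hM.symm
  have hlt : M < (Subgroup.normalizer (M : Set G)) := hnc M (lt_top_iff_ne_top.mpr hMne)
  have hdvd : (Subgroup.normalizer (M : Set G)).index ∣ M.index := Subgroup.index_dvd_of_le le_normalizer
  rw [hM] at hdvd
  rcases (Nat.dvd_prime hp).mp hdvd with h1 | hpe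
  · exact Subgroup.index_eq_one.mp h1
  · exfalso
    have : M = (Subgroup.normalizer (M : Set G)) := myA2_eq_of_le_of_index_eq le_normalizer (by rw [hM, hpe]) (by simp [hM, hp.ne_zero])
    exact hlt.ne this

/-- In a finite p-group, every proper subgroup is contained in a subgroup of index p. -/
lemma myA2_exists_index_prime (hp : p.Prime) (hG : IsPGroup p G) {K : Subgroup G}
    (hK : K ≠ ⊤) : ∃ L : Subgroup G, K ≤ L ∧ L.index = p := by
  haveI : Fact p.Prime := ⟨hp⟩
  obtain ⟨L, hLco, hKL⟩ := (eq_top_or_exists_le_coatom K).resolve_left hK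
  refine ⟨L, hKL, ?_⟩
  -- L is a coatom, prove index = p
  haveI : L.Normal := by
    have hnil : Group.IsNilpotent G := hG.isNilpotent
    exact NormalizerCondition.normal_of_coatom L normalizerCondition_of_isNilpotent hLco
  -- quotient has no nontrivial proper subgroups
  have hq : ∀ S : Subgroup (G ⧸ L), S = ⊥ ∨ S = ⊤ := by
    intro S
    have hsur : Function.Surjective (QuotientGroup.mk' L) := QuotientGroup.mk'_surjective L
    have hle : L ≤ S.comap (QuotientGroup.mk' L) := by
      intro g hg
      have : (QuotientGroup.mk' L) g = 1 := (QuotientGroup.eq_one_iff g).mpr hg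
      simp only [Subgroup.mem_comap, this]; exact S.one_mem
    rcases lt_or_eq_of_le hle with hlt | heq
    · right
      have htop := hLco.2 _ hlt
      have hmc := Subgroup.map_comap_eq_self_of_surjective (f := QuotientGroup.mk' L) hsur S
      rw [← hmc, htop]
      exact Subgroup.map_top_of_surjective _ hsur
    · left
      have hmc := Subgroup.map_comap_eq_self_of_surjective (f := QuotientGroup.mk' L) hsur S
      rw [← hmc, ← heq]
      ext q
      simp only [Subgroup.mem_map, Subgroup.mem_bot]
      constructor
      · rintro ⟨g, hg, rfl⟩
        exact (QuotientGroup.eq_one_iff g).mpr hg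
      · rintro rfl; exact ⟨1, L.one_mem, rfl⟩
  -- now count: the quotient is a nontrivial p-group all of whose subgroups are trivial
  have hQp : IsPGroup p (G ⧸ L) := hG.to_quotient L
  have hQnt : Nontrivial (G ⧸ L) := by
    have h1 : L.index ≠ 1 := fun h => hLco.1 (Subgroup.index_eq_one.mp h)
    have hcard : Nat.card (G ⧸ L) ≠ 1 := by rwa [← Subgroup.index_eq_card]
    have hpos : 0 < Nat.card (G ⧸ L) := Nat.card_pos
    exact Finite.one_lt_card_iff_nontrivial.mp (by omega)
  obtain ⟨q, hq1⟩ := exists_ne (1 : G ⧸ L)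
  obtain ⟨k, hk⟩ := hQp q
  have hdvd : orderOf q ∣ p ^ k := orderOf_dvd_of_pow_eq_one hk
  obtain ⟨j, hjk, hj⟩ := (Nat.dvd_prime_pow hp).mp hdvd
  have hj1 : 1 ≤ j := by
    rcases Nat.eq_zero_or_pos j with rfl | h
    · simp at hj; exact absurd hj hq1
    · exact h
  set q' := q ^ (p ^ (j - 1)) with hq'def
  have hq'p : q' ^ p = 1 := by
    rw [hq'def, ← pow_mul, ← pow_succ, Nat.sub_add_cancel hj1, ← hj]
    exact pow_orderOf_eq_one q
  have hq'ne : q' ≠ 1 := by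
    intro h
    have : orderOf q ∣ p ^ (j - 1) := orderOf_dvd_of_pow_eq_one h
    rw [hj] at this
    have := Nat.le_of_dvd (Nat.pow_pos hp.pos) this
    have := Nat.pow_lt_pow_right hp.one_lt (Nat.sub_lt hj1 one_pos)
    omega
  have hord : orderOf q' = p := by
    have h1 : orderOf q' ∣ p := orderOf_dvd_of_pow_eq_one hq'p
    rcases (Nat.dvd_prime hp).mp h1 with h | h
    · exact absurd (orderOf_eq_one_iff.mp h) hq'ne
    · exact h
  have hztop : Subgroup.zpowers q' = ⊤ := by
    rcases hq (Subgroup.zpowers q') with h | h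
    · exfalso; exact hq'ne (Subgroup.mem_bot.mp (h ▸ Subgroup.mem_zpowers q'))
    · exact h
  have heq : L.index = Nat.card (G ⧸ L) := Subgroup.index_eq_card L
  have h2 : Nat.card (G ⧸ L) = Nat.card (Subgroup.zpowers q') := by
    rw [hztop]
    exact (Nat.card_congr Subgroup.topEquiv.toEquiv).symm
  rw [heq, h2, Nat.card_zpowers, hord]

/-- A subgroup of prime index contains all commutators. -/
lemma myA2_commutator_mem_of_index_prime (hp : p.Prime) (hG : IsPGroup p G) {K : Subgroup G}
    (hK : K.index = p) (g h : G) : ⁅g, h⁆ ∈ K := by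
  haveI : Fact p.Prime := ⟨hp⟩
  haveI : K.Normal := myA2_normal_of_index_prime hp hG hK
  have hcyc : IsCyclic (G ⧸ K) := isCyclic_of_prime_card (by rw [← Subgroup.index_eq_card, hK])
  have hcomm : ∀ a b : G ⧸ K, a * b = b * a :=
    commutative_of_cyclic_center_quotient (MonoidHom.id _) (by simp)
  have : QuotientGroup.mk' K ⁅g, h⁆ = 1 := by
    rw [map_commutatorElement]
    exact commutatorElement_eq_one_iff_mul_comm.mpr (hcomm _ _)
  exact (QuotientGroup.eq_one_iff _).mp this

/-- Two distinct subgroups of index p intersect in a subgroup of index p^2. -/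
lemma myA2_index_inf (hp : p.Prime) (hG : IsPGroup p G) {M N : Subgroup G}
    (hM : M.index = p) (hN : N.index = p) (hMN : M ≠ N) : (M ⊓ N).index = p ^ 2 := by
  haveI : N.Normal := myA2_normal_of_index_prime hp hG hN
  have h1 : (M ⊓ N).relIndex M = N.relIndex M := by
    rw [inf_comm, Subgroup.inf_relIndex_right]
  have h2 : N.relIndex M ∣ p := hN ▸ Subgroup.relIndex_dvd_index_of_normal N M
  have h3 : N.relIndex M ≠ 1 := by
    intro h
    have hle : M ≤ N := Subgroup.relIndex_eq_one.mp h
    exact hMN (myA2_eq_of_le_of_index_eq hle (by rw [hM, hN]) (by simp [hM, hp.ne_zero]))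
  have h4 : N.relIndex M = p := ((Nat.dvd_prime hp).mp h2).resolve_left h3
  have h5 := Subgroup.relIndex_mul_index (inf_le_left : M ⊓ N ≤ M)
  rw [h1, h4, hM] at h5
  rw [← h5, sq]

lemma myA2_sup_eq_top (hp : p.Prime) {M N : Subgroup G}
    (hM : M.index = p) (hN : N.index = p) (hMN : M ≠ N) : M ⊔ N = ⊤ := by
  have hdvd : (M ⊔ N).index ∣ p := hM ▸ Subgroup.index_dvd_of_le le_sup_left
  rcases (Nat.dvd_prime hp).mp hdvd with h1 | hpe
  · exact Subgroup.index_eq_one.mp h1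
  · exfalso
    have hMeq : M = M ⊔ N := myA2_eq_of_le_of_index_eq le_sup_left (by rw [hM, hpe]) (by simp [hM, hp.ne_zero])
    have hNeq : N = M ⊔ N := myA2_eq_of_le_of_index_eq le_sup_right (by rw [hN, hpe]) (by simp [hN, hp.ne_zero])
    exact hMN (hMeq.trans hNeq.symm)

/-- Structure of a minimal nonabelian finite p-group (all of whose index-p subgroups
are abelian): the commutator of a noncommuting pair is central of order p and generates
the derived subgroup. -/
lemma myA2_minna {H : Type*} [Group H] [Finite H] (hp : p.Prime) (hH : IsPGroup p H)
    (hab : ∀ K : Subgroup H, K.index = p → ∀ a ∈ K, ∀ b ∈ K, a * b = b * a)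
    {x y : H} (hxy : x * y ≠ y * x) :
    ⁅x, y⁆ ≠ 1 ∧ ⁅x, y⁆ ^ p = 1 ∧ ∀ g h : H, ⁅g, h⁆ ∈ Subgroup.zpowers ⁅x, y⁆ := by
  haveI : Fact p.Prime := ⟨hp⟩
  -- x and y generate H
  have hclos : Subgroup.closure {x, y} = ⊤ := by
    by_contra hne
    obtain ⟨L, hle, hLp⟩ := myA2_exists_index_prime hp hH hne
    have hx : x ∈ L := hle (Subgroup.subset_closure (by simp))
    have hy : y ∈ L := hle (Subgroup.subset_closure (by simp))
    exact hxy (hab L hLp x hx y hy)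
  -- centralizers of x and y have index p
  have hcent : ∀ z w : H, z * w ≠ w * z →
      (Subgroup.centralizer {z}).index = p := by
    intro z w hzw
    have hzz : z ∈ Subgroup.centralizer {z} := Subgroup.mem_centralizer_singleton_iff.mpr rfl
    have hne : Subgroup.centralizer {z} ≠ ⊤ := by
      intro h
      have : w ∈ Subgroup.centralizer {z} := h ▸ Subgroup.mem_top w
      exact hzw (Subgroup.mem_centralizer_singleton_iff.mp this).symm
    obtain ⟨L, hle, hLp⟩ := myA2_exists_index_prime hp hH hne
    have hL : L = Subgroup.centralizer {z} := by
      refine le_antisymm (fun l hl => ?_) hle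
      exact Subgroup.mem_centralizer_singleton_iff.mpr (hab L hLp l hl z (hle hzz))
    rw [← hL]; exact hLp
  have hCx : (Subgroup.centralizer {x}).index = p := hcent x y hxy
  have hCy : (Subgroup.centralizer {y}).index = p := hcent y x (fun h => hxy h.symm)
  have hCne : Subgroup.centralizer {x} ≠ Subgroup.centralizer {y} := by
    intro h
    have hxx : x ∈ Subgroup.centralizer {y} :=
      h ▸ Subgroup.mem_centralizer_singleton_iff.mpr rfl
    exact hxy (Subgroup.mem_centralizer_singleton_iff.mp hxx)
  -- the center is the intersection, of index p^2
  have hZ : Subgroup.centralizer {x} ⊓ Subgroup.centralizer {y} = Subgroup.center H := by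
    refine le_antisymm (fun z hz => ?_) (le_inf (Subgroup.center_le_centralizer _)
      (Subgroup.center_le_centralizer _))
    rw [Subgroup.mem_inf] at hz
    obtain ⟨hz1, hz2⟩ := hz
    rw [Subgroup.mem_center_iff]
    intro g
    have hg : g ∈ Subgroup.closure ({x, y} : Set H) := hclos ▸ Subgroup.mem_top g
    induction hg using Subgroup.closure_induction with
    | mem w hw =>
      rw [Set.mem_insert_iff, Set.mem_singleton_iff] at hw
      rcases hw with rfl | rfl
      · exact (Subgroup.mem_centralizer_singleton_iff.mp hz1).symm
      · exact (Subgroup.mem_centralizer_singleton_iff.mp hz2).symm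
    | one => simp
    | mul a b ha hb iha ihb => rw [mul_assoc, ihb, ← mul_assoc, iha, mul_assoc]
    | inv a ha iha =>
      rw [inv_mul_eq_iff_eq_mul, ← mul_assoc, iha, mul_assoc, mul_inv_cancel, mul_one]
  have hZidx : (Subgroup.center H).index = p ^ 2 := by
    rw [← hZ]
    exact myA2_index_inf hp hH hCx hCy hCne
  have hQcard : Nat.card (H ⧸ Subgroup.center H) = p ^ 2 := by
    rw [← Subgroup.index_eq_card, hZidx]
  -- the central quotient is not cyclic
  have hnc : ¬ IsCyclic (H ⧸ Subgroup.center H) := by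
    intro hcyc
    exact hxy (commutative_of_cyclic_center_quotient (QuotientGroup.mk' (Subgroup.center H))
      (le_of_eq (QuotientGroup.ker_mk' _)) x y)
  -- every element of the central quotient has order dividing p
  have hexp : ∀ q : H ⧸ Subgroup.center H, q ^ p = 1 := by
    intro q
    have hdvd : orderOf q ∣ p ^ 2 := by rw [← hQcard]; exact orderOf_dvd_natCard q
    obtain ⟨j, hj2, hj⟩ := (Nat.dvd_prime_pow hp).mp hdvd
    interval_cases j
    · rw [pow_zero] at hj
      rw [orderOf_eq_one_iff.mp hj, one_pow]
    · rw [pow_one] at hj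
      rw [← hj]; exact pow_orderOf_eq_one q
    · exfalso
      exact hnc (isCyclic_of_orderOf_eq_card q (by rw [hj, hQcard]))
  -- the central quotient is abelian
  have hQab : ∀ a b : H ⧸ Subgroup.center H, a * b = b * a := by
    set Q := H ⧸ Subgroup.center H with hQdef
    haveI : Nontrivial Q := by
      refine Finite.one_lt_card_iff_nontrivial.mp ?_
      rw [hQcard]
      exact Nat.one_lt_pow (by norm_num) hp.one_lt
    have hQp : IsPGroup p Q := hH.to_quotient _
    haveI hZQnt : Nontrivial (Subgroup.center Q) := hQp.center_nontrivial
    have hidx : (Subgroup.center Q).index ∣ p ^ 2 := by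
      rw [← hQcard]; exact Subgroup.index_dvd_card (H := Subgroup.center Q)
    have hZQcard : Nat.card (Subgroup.center Q) * (Subgroup.center Q).index = p ^ 2 := by
      rw [Subgroup.card_mul_index, hQcard]
    have hcards : 1 < Nat.card (Subgroup.center Q) := Finite.one_lt_card_iff_nontrivial.mpr hZQnt
    obtain ⟨j, hj2, hj⟩ := (Nat.dvd_prime_pow hp).mp hidx
    have hcyc : IsCyclic (Q ⧸ Subgroup.center Q) := by
      interval_cases j
      · rw [pow_zero] at hj
        haveI : Subsingleton (Q ⧸ Subgroup.center Q) :=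
          (Nat.card_eq_one_iff_unique.mp (by rw [← Subgroup.index_eq_card, hj])).1
        exact isCyclic_of_subsingleton
      · exact isCyclic_of_prime_card (by rw [← Subgroup.index_eq_card, hj, pow_one])
      · exfalso
        rw [hj] at hZQcard
        have : Nat.card (Subgroup.center Q) = 1 := by
          have hpos : 0 < p ^ 2 := pow_pos hp.pos 2
          nlinarith [hZQcard]
        omega
    exact commutative_of_cyclic_center_quotient (QuotientGroup.mk' (Subgroup.center Q))
      (le_of_eq (QuotientGroup.ker_mk' _))
  -- the commutator is central
  have hcZ : ⁅x, y⁆ ∈ Subgroup.center H := by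
    have : QuotientGroup.mk' (Subgroup.center H) ⁅x, y⁆ = 1 := by
      rw [map_commutatorElement]
      exact commutatorElement_eq_one_iff_mul_comm.mpr (hQab _ _)
    exact (QuotientGroup.eq_one_iff _).mp this
  have hc1 : ⁅x, y⁆ ≠ 1 := by
    rw [Ne, commutatorElement_eq_one_iff_mul_comm]; exact hxy
  -- p-th powers are central
  have hyp : y ^ p ∈ Subgroup.center H := by
    have : QuotientGroup.mk' (Subgroup.center H) (y ^ p) = 1 := by
      rw [map_pow]; exact hexp _
    exact (QuotientGroup.eq_one_iff _).mp this
  -- the commutator has order p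
  have hpowc : ∀ n : ℕ, ⁅x, y ^ n⁆ = ⁅x, y⁆ ^ n := by
    intro n
    induction n with
    | zero => simp
    | succ n ih =>
      have hkey : ⁅x, y ^ (n + 1)⁆ = ⁅x, y⁆ * (y * ⁅x, y ^ n⁆ * y⁻¹) := by
        rw [pow_succ' y n]
        simp only [commutatorElement_def]
        group
      rw [hkey, ih]
      have hcen : y * ⁅x, y⁆ ^ n * y⁻¹ = ⁅x, y⁆ ^ n := by
        have h2 := (Subgroup.mem_center_iff.mp (pow_mem hcZ n)) y
        rw [h2, mul_assoc, mul_inv_cancel, mul_one]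
      rw [hcen, ← pow_succ']
  have hcp : ⁅x, y⁆ ^ p = 1 := by
    rw [← hpowc p]
    exact commutatorElement_eq_one_iff_mul_comm.mpr
      ((Subgroup.mem_center_iff.mp hyp) x)
  refine ⟨hc1, hcp, ?_⟩
  -- all commutators lie in the cyclic group generated by ⁅x, y⁆
  set N := Subgroup.zpowers ⁅x, y⁆ with hNdef
  have hNcen : ∀ w ∈ N, ∀ a : H, a * w * a⁻¹ = w := by
    intro w hw a
    have hwc : w ∈ Subgroup.center H := Subgroup.zpowers_le.mpr hcZ hw
    have h2 := (Subgroup.mem_center_iff.mp hwc) a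
    rw [h2, mul_assoc, mul_inv_cancel, mul_one]
  have hbase : ∀ g ∈ ({x, y} : Set H), ∀ h : H, ⁅g, h⁆ ∈ N := by
    intro g hg h
    have hh : h ∈ Subgroup.closure ({x, y} : Set H) := hclos ▸ Subgroup.mem_top h
    induction hh using Subgroup.closure_induction with
    | mem w hw =>
      rw [Set.mem_insert_iff, Set.mem_singleton_iff] at hg hw
      have hself : ∀ u : H, ⁅u, u⁆ ∈ N := fun u => by
        rw [commutatorElement_eq_one_iff_mul_comm.mpr rfl]; exact one_mem N
      rcases hg with rfl | rfl <;> rcases hw with rfl | rfl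
      · exact hself _
      · exact Subgroup.mem_zpowers _
      · rw [← commutatorElement_inv]
        exact inv_mem (Subgroup.mem_zpowers _)
      · exact hself _
    | one =>
      rw [commutatorElement_one_right]; exact one_mem N
    | mul a b ha hb iha ihb =>
      have hkey : ⁅g, a * b⁆ = ⁅g, a⁆ * (a * ⁅g, b⁆ * a⁻¹) := by
        simp only [commutatorElement_def]; group
      rw [hkey, hNcen _ ihb a]
      exact mul_mem iha ihb
    | inv a ha iha =>
      have hkey : ⁅g, a⁻¹⁆ = a⁻¹ * ⁅g, a⁆⁻¹ * a := by
        simp only [commutatorElement_def]; group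
      rw [hkey]
      have := hNcen _ (inv_mem iha) a⁻¹
      rw [inv_inv] at this
      rw [this]
      exact inv_mem iha
  intro g h
  have hg : g ∈ Subgroup.closure ({x, y} : Set H) := hclos ▸ Subgroup.mem_top g
  induction hg using Subgroup.closure_induction with
  | mem w hw => exact hbase w hw h
  | one => rw [commutatorElement_one_left]; exact one_mem N
  | mul a b ha hb iha ihb =>
    have hkey : ⁅a * b, h⁆ = (a * ⁅b, h⁆ * a⁻¹) * ⁅a, h⁆ := by
      simp only [commutatorElement_def]; group
    rw [hkey, hNcen _ ihb a]
    exact mul_mem ihb iha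
  | inv a ha iha =>
    have hkey : ⁅a⁻¹, h⁆ = a⁻¹ * ⁅a, h⁆⁻¹ * a := by
      simp only [commutatorElement_def]; group
    rw [hkey]
    have := hNcen _ (inv_mem iha) a⁻¹
    rw [inv_inv] at this
    rw [this]
    exact inv_mem iha

/-- In an A_2-group, the derived subgroup of any subgroup of index p is central. -/
lemma myA2_commutator_le_center (hp : p.Prime) (hG : IsPGroup p G)
    (hab : ∀ K : Subgroup G, K.index = p ^ 2 → ∀ a ∈ K, ∀ b ∈ K, a * b = b * a)
    {M : Subgroup G} (hM : M.index = p) : ⁅M, M⁆ ≤ Subgroup.center G := by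
  haveI : Fact p.Prime := ⟨hp⟩
  by_cases hcomm : ∀ a ∈ M, ∀ b ∈ M, a * b = b * a
  · rw [Subgroup.commutator_le]
    intro g hg h hh
    rw [commutatorElement_eq_one_iff_mul_comm.mpr (hcomm g hg h hh)]
    exact (Subgroup.center G).one_mem
  push_neg at hcomm
  obtain ⟨x, hxM, y, hyM, hxy⟩ := hcomm
  -- work inside M: all index-p subgroups of M are abelian
  have hMp : IsPGroup p ↥M := hG.to_subgroup M
  have hab' : ∀ K : Subgroup ↥M, K.index = p → ∀ a ∈ K, ∀ b ∈ K, a * b = b * a := by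
    intro K hK a ha b hb
    set L := K.map M.subtype with hLdef
    have hLle : L ≤ M := Subgroup.map_subtype_le K
    have hsub : L.subgroupOf M = K := by
      rw [hLdef, Subgroup.subgroupOf, Subgroup.comap_map_eq_self_of_injective M.subtype_injective]
    have hrel : L.relIndex M = p := by
      rw [Subgroup.relIndex, hsub, hK]
    have hLidx : L.index = p ^ 2 := by
      have h2 := Subgroup.relIndex_mul_index hLle
      rw [hrel, hM] at h2
      rw [← h2, sq]
    have := hab L hLidx (a : G) ⟨a, ha, rfl⟩ (b : G) ⟨b, hb, rfl⟩
    exact Subtype.ext (by push_cast; exact this)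
  have hxy' : (⟨x, hxM⟩ : ↥M) * ⟨y, hyM⟩ ≠ ⟨y, hyM⟩ * ⟨x, hxM⟩ := by
    intro h
    exact hxy (congrArg Subtype.val h)
  obtain ⟨hc1, hcp, hcgen⟩ := myA2_minna hp hMp hab' hxy'
  -- translate to G
  have hcoe : ((⁅(⟨x, hxM⟩ : ↥M), (⟨y, hyM⟩ : ↥M)⁆ : ↥M) : G) = ⁅x, y⁆ := rfl
  have hc1G : ⁅x, y⁆ ≠ 1 := by
    intro h
    exact hc1 (Subtype.ext (by rw [hcoe, h]; rfl))
  have hcpG : ⁅x, y⁆ ^ p = 1 := by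
    have := congrArg Subtype.val hcp
    push_cast at this
    rwa [hcoe] at this
  haveI hMnorm : M.Normal := myA2_normal_of_index_prime hp hG hM
  set N₀ := Subgroup.zpowers ⁅x, y⁆ with hN₀def
  have hMM : ⁅M, M⁆ = N₀ := by
    apply le_antisymm
    · have h1 : M = Subgroup.map M.subtype ⊤ := by
        rw [← MonoidHom.range_eq_map, Subgroup.range_subtype]
      rw [h1, ← Subgroup.map_commutator]
      have h2 : ⁅(⊤ : Subgroup ↥M), ⊤⁆ ≤ Subgroup.zpowers ⁅(⟨x, hxM⟩ : ↥M), (⟨y, hyM⟩ : ↥M)⁆ :=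
        Subgroup.commutator_le.mpr (fun g _ h _ => hcgen g h)
      calc Subgroup.map M.subtype ⁅(⊤ : Subgroup ↥M), ⊤⁆
          ≤ Subgroup.map M.subtype (Subgroup.zpowers ⁅(⟨x, hxM⟩ : ↥M), (⟨y, hyM⟩ : ↥M)⁆) :=
            Subgroup.map_mono h2
        _ = N₀ := by rw [MonoidHom.map_zpowers]; rfl
    · rw [hN₀def, Subgroup.zpowers_le]
      exact Subgroup.commutator_mem_commutator hxM hyM
  haveI hN₀norm : N₀.Normal := hMM ▸ (inferInstance : (⁅M, M⁆ : Subgroup G).Normal)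
  have hordc : orderOf ⁅x, y⁆ = p := orderOf_eq_prime hcpG hc1G
  have hcardN₀ : Nat.card ↥N₀ = p := by rw [hN₀def, Nat.card_zpowers, hordc]
  -- conjugation action of G on N₀ has a nontrivial fixed point
  letI : MulAction G ↥N₀ := MulAction.compHom ↥N₀ (MulAut.conjNormal : G →* MulAut ↥N₀)
  have hsmul : ∀ (g : G) (n : ↥N₀), ((g • n : ↥N₀) : G) = g * n * g⁻¹ := fun g n =>
    MulAut.conjNormal_apply g n
  have h1fix : (1 : ↥N₀) ∈ MulAction.fixedPoints G ↥N₀ := by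
    intro g
    apply Subtype.ext
    rw [hsmul]
    simp
  have hmod := IsPGroup.card_modEq_card_fixedPoints hG ↥N₀
  rw [hcardN₀] at hmod
  have hdvd : p ∣ Nat.card (MulAction.fixedPoints G ↥N₀) :=
    (Nat.modEq_zero_iff_dvd).mp ((((Nat.modEq_zero_iff_dvd).mpr dvd_rfl).symm.trans hmod).symm)
  have hpos : 0 < Nat.card (MulAction.fixedPoints G ↥N₀) :=
    Nat.card_pos_iff.mpr ⟨⟨⟨1, h1fix⟩⟩, Set.Finite.to_subtype (Set.toFinite _)⟩
  have hlt : 1 < Nat.card (MulAction.fixedPoints G ↥N₀) := by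
    have := Nat.le_of_dvd hpos hdvd
    have := hp.one_lt
    omega
  haveI : Nontrivial (MulAction.fixedPoints G ↥N₀) := Finite.one_lt_card_iff_nontrivial.mp hlt
  obtain ⟨w, hw⟩ := exists_ne (⟨1, h1fix⟩ : MulAction.fixedPoints G ↥N₀)
  have hz1 : (w : ↥N₀) ≠ 1 := by
    intro h
    exact hw (Subtype.ext h)
  have hzcen : ((w : ↥N₀) : G) ∈ Subgroup.center G := by
    rw [Subgroup.mem_center_iff]
    intro g
    have := w.2 g
    have h2 := congrArg Subtype.val this
    rw [hsmul] at h2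
    calc g * ((w : ↥N₀) : G) = (g * ((w : ↥N₀) : G) * g⁻¹) * g := by group
      _ = ((w : ↥N₀) : G) * g := by rw [h2]
  -- the whole of N₀ is generated by w, hence central
  have hcmem : ∀ n : ↥N₀, (n : G) ∈ Subgroup.center G := by
    intro n
    have hn : n ∈ Subgroup.zpowers (w : ↥N₀) := mem_zpowers_of_prime_card hcardN₀ hz1
    obtain ⟨k, hk⟩ := hn
    have := congrArg Subtype.val hk
    push_cast at this
    rw [← this]
    exact Subgroup.zpow_mem _ hzcen k
  rw [hMM]
  intro n hn
  exact hcmem ⟨n, hn⟩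

end helpers

/-- If a finite `p`-group `G` is an `A_2`-group, then `d(G) ≤ 3` and the
nilpotency class of `G` is at most `3`. -/
theorem A2_rank_and_class (p : ℕ) (hp : p.Prime) (G : Type*) [Group G] [Finite G]
    (hG : IsPGroup p G) (hA : IsAtGroup p 2 G) :
    Group.rank G ≤ 3 ∧ (⊤ : Subgroup G).lowerCentralSeries 3 = ⊥ := by
  haveI : Fact p.Prime := ⟨hp⟩
  obtain ⟨habel, M, hMidx, hMna⟩ := hA
  rw [show (2 : ℕ) - 1 = 1 from rfl, pow_one] at hMidx
  push_neg at hMna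
  obtain ⟨x, hxM, y, hyM, hxy⟩ := hMna
  have hMne : M ≠ ⊤ := by
    intro h
    rw [h, Subgroup.index_top] at hMidx
    exact hp.one_lt.ne' hMidx.symm
  obtain ⟨g, hg⟩ : ∃ g : G, g ∉ M := by
    by_contra h
    push_neg at h
    exact hMne ((Subgroup.eq_top_iff' M).mpr h)
  have hzg : Subgroup.zpowers g ≠ ⊤ := by
    intro h
    haveI : IsCyclic G := ⟨⟨g, fun a => by
      have ha : a ∈ (⊤ : Subgroup G) := Subgroup.mem_top a
      rw [← h] at ha
      exact ha⟩⟩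
    exact hxy (commutative_of_cyclic_center_quotient (MonoidHom.id G) (by simp) x y)
  obtain ⟨N, hgN, hNidx⟩ := myA2_exists_index_prime hp hG hzg
  have hgN' : g ∈ N := hgN (Subgroup.mem_zpowers g)
  have hMN : M ≠ N := fun h => hg (h ▸ hgN')
  constructor
  · -- rank bound
    have hclos : Subgroup.closure {x, y, g} = ⊤ := by
      by_contra hne
      obtain ⟨L, hle, hLidx⟩ := myA2_exists_index_prime hp hG hne
      have hxL : x ∈ L := hle (Subgroup.subset_closure (by simp))
      have hyL : y ∈ L := hle (Subgroup.subset_closure (by simp))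
      have hgL : g ∈ L := hle (Subgroup.subset_closure (by simp))
      by_cases hLM : L = M
      · exact hg (hLM ▸ hgL)
      · have hidx2 : (L ⊓ M).index = p ^ 2 := myA2_index_inf hp hG hLidx hMidx hLM
        exact hxy (habel _ hidx2 x ⟨hxL, hxM⟩ y ⟨hyL, hyM⟩)
    classical
    have hS : Subgroup.closure ((({x, y, g} : Finset G) : Set G)) = ⊤ := by
      rw [show ((({x, y, g} : Finset G) : Set G)) = ({x, y, g} : Set G) by
        simp only [Finset.coe_insert, Finset.coe_singleton]]
      exact hclos
    have hr := Group.rank_le hS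
    have h1 : ({y, g} : Finset G).card ≤ 2 :=
      (Finset.card_insert_le _ _).trans (by simp)
    have h2 : ({x, y, g} : Finset G).card ≤ 3 :=
      (Finset.card_insert_le _ _).trans (by omega)
    omega
  · -- class bound
    have hMcent : ⁅M, M⁆ ≤ Subgroup.center G := myA2_commutator_le_center hp hG habel hMidx
    have hNcent : ⁅N, N⁆ ≤ Subgroup.center G := myA2_commutator_le_center hp hG habel hNidx
    have hG'le : (⊤ : Subgroup G).lowerCentralSeries 1 ≤ M ⊓ N := by
      rw [Subgroup.top_lowerCentralSeries_one]
      refine le_inf ?_ ?_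
      · exact Subgroup.commutator_le.mpr
          (fun a _ b _ => myA2_commutator_mem_of_index_prime hp hG hMidx a b)
      · exact Subgroup.commutator_le.mpr
          (fun a _ b _ => myA2_commutator_mem_of_index_prime hp hG hNidx a b)
    have hg3 : (⊤ : Subgroup G).lowerCentralSeries 2 ≤ Subgroup.center G := by
      show ⁅(⊤ : Subgroup G).lowerCentralSeries 1, (⊤ : Subgroup G)⁆ ≤ Subgroup.center G
      rw [Subgroup.commutator_le]
      intro d hd t htt
      clear htt
      have hdD : d ∈ M ⊓ N := hG'le hd
      have hsup : M ⊔ N = ⊤ := myA2_sup_eq_top hp hMidx hNidx hMN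
      have ht' : t ∈ Subgroup.closure ((M : Set G) ∪ (N : Set G)) := by
        rw [Subgroup.closure_union, Subgroup.closure_eq, Subgroup.closure_eq, hsup]
        exact Subgroup.mem_top t
      induction ht' using Subgroup.closure_induction with
      | mem u hu =>
        rcases hu with hu | hu
        · exact hMcent (Subgroup.commutator_mem_commutator hdD.1 hu)
        · exact hNcent (Subgroup.commutator_mem_commutator hdD.2 hu)
      | one => rw [commutatorElement_one_right]; exact (Subgroup.center G).one_mem
      | mul a b ha hb iha ihb =>
        have hkey : ⁅d, a * b⁆ = ⁅d, a⁆ * (a * ⁅d, b⁆ * a⁻¹) := by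
          simp only [commutatorElement_def]; group
        have hconj : a * ⁅d, b⁆ * a⁻¹ = ⁅d, b⁆ := by
          have h2 := (Subgroup.mem_center_iff.mp ihb) a
          rw [h2, mul_assoc, mul_inv_cancel, mul_one]
        rw [hkey, hconj]
        exact mul_mem iha ihb
      | inv a ha iha =>
        have hkey : ⁅d, a⁻¹⁆ = a⁻¹ * ⁅d, a⁆⁻¹ * a := by
          simp only [commutatorElement_def]; group
        have hconj : a⁻¹ * ⁅d, a⁆⁻¹ * a = ⁅d, a⁆⁻¹ := by
          have h2 := (Subgroup.mem_center_iff.mp (inv_mem iha)) a⁻¹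
          rw [h2, mul_assoc, inv_mul_cancel, mul_one]
        rw [hkey, hconj]
        exact inv_mem iha
    have hle : (⊤ : Subgroup G).lowerCentralSeries 3 ≤ ⊥ := by
      show ⁅(⊤ : Subgroup G).lowerCentralSeries 2, (⊤ : Subgroup G)⁆ ≤ (⊥ : Subgroup G)
      rw [Subgroup.commutator_le]
      intro z hz t _
      rw [Subgroup.mem_bot]
      exact commutatorElement_eq_one_iff_mul_comm.mpr
        ((Subgroup.mem_center_iff.mp (hg3 hz)) t).symm
    exact le_antisymm hle bot_le
end
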